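/- arXiv:0903.1642 — 7 statements merged into one kernel-verified Lean document; each statement's English description precedes it below -/
import Mathlib

section
/- For every infinite set S ⊆ ℕ and every Bohr₀-set A ⊆ ℤ, A ∩ Δ(S) ≠ ∅; that is, every Bohr₀-set is a Δ*-set. -/
/-- `Δ(S) = {b − a : a, b ∈ S, b > a}`, viewed as a set of integers. -/
def deltaSet (S : Set ℕ) : Set ℤ :=
  { n : ℤ | ∃ a ∈ S, ∃ b ∈ S, a < b ∧ n = (b : ℤ) - (a : ℤ) }

/-- `A ⊆ ℤ` is a Bohr₀-set. -/
def IsBohr0 (A : Set ℤ) : Prop :=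
  ∃ m : ℕ, 0 < m ∧ ∃ (α : Fin m → AddCircle (1 : ℝ)) (U : Set (Fin m → AddCircle (1 : ℝ))),
    IsOpen U ∧ (0 : Fin m → AddCircle (1 : ℝ)) ∈ U ∧
    { n : ℤ | (fun i => n • α i) ∈ U } ⊆ A

/-- For every infinite `S ⊆ ℕ` and every Bohr₀-set `A ⊆ ℤ`, `A ∩ Δ(S) ≠ ∅`;
that is, every Bohr₀-set is a `Δ*`-set. -/
theorem isBohr0_isDeltaStar (A : Set ℤ) (hA : IsBohr0 A)
    (S : Set ℕ) (hS : S.Infinite) :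
    (A ∩ deltaSet S).Nonempty := by
  obtain ⟨m, hm, α, U, hUopen, hU0, hUA⟩ := hA
  have hpre : IsOpen ((fun p : (Fin m → AddCircle (1 : ℝ)) × (Fin m → AddCircle (1 : ℝ)) => p.1 - p.2) ⁻¹' U) := hUopen.preimage continuous_sub
  have h00 : ((0 : Fin m → AddCircle (1 : ℝ)), (0 : Fin m → AddCircle (1 : ℝ))) ∈ (fun p : (Fin m → AddCircle (1 : ℝ)) × (Fin m → AddCircle (1 : ℝ)) => p.1 - p.2) ⁻¹' U := by
    simpa using hU0
  obtain ⟨V1, V2, hV1, hV2, h01, h02, hsub⟩ := isOpen_prod_iff.mp hpre 0 0 h00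
  set V := V1 ∩ V2 with hV
  let f : ℕ → Fin m → AddCircle (1 : ℝ) := fun n i => (n : ℤ) • α i
  let C : (Fin m → AddCircle (1 : ℝ)) → Set (Fin m → AddCircle (1 : ℝ)) := fun x => (fun y => y - x) ⁻¹' V
  have hCopen : ∀ x, IsOpen (C x) := fun x =>
    ((hV1.inter hV2).preimage (continuous_sub_right x))
  have hcover : (Set.univ : Set (Fin m → AddCircle (1 : ℝ))) ⊆ ⋃ x, C x := by
    intro y _
    exact Set.mem_iUnion.mpr ⟨y, by simp [C, V, h01, h02]⟩
  obtain ⟨t, ht⟩ := isCompact_univ.elim_finite_subcover C hCopen hcover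
  have hpig : ∃ x ∈ t, {n | n ∈ S ∧ f n ∈ C x}.Infinite := by
    by_contra h
    push_neg at h
    have hsubS : S ⊆ ⋃ x ∈ t, {n | n ∈ S ∧ f n ∈ C x} := by
      intro n hn
      obtain ⟨x, hx, hfx⟩ := Set.mem_iUnion₂.mp (ht (Set.mem_univ (f n)))
      exact Set.mem_iUnion₂.mpr ⟨x, hx, hn, hfx⟩
    exact hS ((Set.Finite.biUnion t.finite_toSet
      (fun x hx => h x hx)).subset hsubS)
  obtain ⟨x, hx, hinf⟩ := hpig
  obtain ⟨a, ha⟩ := hinf.nonempty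
  obtain ⟨b, hb, hab⟩ := hinf.exists_gt a
  have hmem : (f b - x, f a - x) ∈ V1 ×ˢ V2 :=
    ⟨hb.2.1, ha.2.2⟩
  have h1 : f b - f a ∈ U := by
    have := hsub hmem
    simpa using this
  have hkey : (fun i => ((b : ℤ) - (a : ℤ)) • α i) ∈ U := by
    have heq : (fun i => ((b : ℤ) - (a : ℤ)) • α i) = f b - f a := by
      funext i
      show ((b:ℤ) - (a:ℤ)) • α i = f b i - f a i
      simp [f, sub_eq_add_neg, add_zsmul, neg_zsmul]
    rw [heq]
    exact h1
  exact ⟨(b : ℤ) - (a : ℤ), hUA hkey, a, ha.1, b, hb.1, hab, rfl⟩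
end

section
/- If A ⊆ ℤ has positive upper Banach density, then the difference set A − A = {a − b : a, b ∈ A} is syndetic. -/
open Filter

/-- `S ⊆ ℤ` is syndetic: some `N > 0` is such that every interval of `N` consecutive
integers meets `S`. -/
def SyndeticZ (S : Set ℤ) : Prop :=
  ∃ N : ℕ, 0 < N ∧ ∀ a : ℤ, ∃ s ∈ S, a ≤ s ∧ s < a + N

open scoped Classical in
/-- The upper Banach density of `A ⊆ ℤ`: the limsup over `N → ∞` of the supremum,
over intervals `I` of `N` consecutive integers, of `|A ∩ I| / N`. -/
noncomputable def upperBanachDensity (A : Set ℤ) : ℝ :=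
  Filter.limsup (fun N : ℕ =>
    ⨆ a : ℤ, (((Finset.Icc a (a + (N : ℤ) - 1)).filter (fun x => x ∈ A)).card : ℝ) / N)
    Filter.atTop

/-- From non-syndeticity one extracts, for each `m`, a sequence of `m` integers whose
pairwise differences avoid `S`. -/
private lemma exists_seq_avoiding (S : Set ℤ)
    (hgap : ∀ N : ℕ, 0 < N → ∃ a : ℤ, ∀ s ∈ S, ¬(a ≤ s ∧ s < a + N)) :
    ∀ k : ℕ, ∃ t : ℕ → ℤ, ∀ i j : ℕ, i < j → j < k → t j - t i ∉ S := by
  intro k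
  induction k with
  | zero => exact ⟨fun _ => 0, fun i j _ hj => absurd hj (Nat.not_lt_zero j)⟩
  | succ k ih =>
    obtain ⟨t, ht⟩ := ih
    rcases Nat.eq_zero_or_pos k with hk | hk
    · exact ⟨t, fun i j hij hj => by omega⟩
    · have hne : ((Finset.range k).image t).Nonempty :=
        ⟨t 0, Finset.mem_image_of_mem t (Finset.mem_range.mpr hk)⟩
      set mx := ((Finset.range k).image t).max' hne with hmx
      set mn := ((Finset.range k).image t).min' hne with hmn
      have hmnmx : mn ≤ mx := Finset.min'_le _ _ (Finset.max'_mem _ hne)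
      obtain ⟨a, ha⟩ := hgap ((mx - mn).toNat + 1) (Nat.succ_pos _)
      refine ⟨fun n => if n < k then t n else a + mx, fun i j hij hjk => ?_⟩
      by_cases hj : j < k
      · have hi : i < k := lt_trans hij hj
        simpa only [if_pos hi, if_pos hj] using ht i j hij hj
      · have hi : i < k := by omega
        simp only [if_neg hj, if_pos hi]
        intro hs
        have h1 : t i ≤ mx :=
          Finset.le_max' _ _ (Finset.mem_image_of_mem t (Finset.mem_range.mpr hi))
        have h2 : mn ≤ t i :=
          Finset.min'_le _ _ (Finset.mem_image_of_mem t (Finset.mem_range.mpr hi))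
        exact ha _ hs ⟨by omega, by push_cast; omega⟩

/-- The key counting estimate: if the pairwise differences of `t 0, …, t (k-1)` avoid
`A - A`, then the `k` translates of `A ∩ I` by the `t i` are pairwise disjoint, giving a
uniform bound on the number of points of `A` in any interval. -/
private lemma key_count (A : Set ℤ) [DecidablePred (fun x => x ∈ A)] (k : ℕ) (hk : 0 < k)
    (t : ℕ → ℤ)
    (ht : ∀ i j : ℕ, i < j → j < k → t j - t i ∉ {x : ℤ | ∃ a ∈ A, ∃ b ∈ A, x = a - b}) :
    ∃ T : ℕ, ∀ (N : ℕ) (a : ℤ),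
      k * ((Finset.Icc a (a + (N : ℤ) - 1)).filter (fun x => x ∈ A)).card ≤ N + T := by
  have hne : ((Finset.range k).image t).Nonempty :=
    ⟨t 0, Finset.mem_image_of_mem t (Finset.mem_range.mpr hk)⟩
  set mx := ((Finset.range k).image t).max' hne with hmx
  set mn := ((Finset.range k).image t).min' hne with hmn
  have hmnmx : mn ≤ mx := Finset.min'_le _ _ (Finset.max'_mem _ hne)
  refine ⟨(mx - mn).toNat, fun N a => ?_⟩
  have hT : ((mx - mn).toNat : ℤ) = mx - mn := Int.toNat_of_nonneg (by omega)
  set F := (Finset.Icc a (a + (N : ℤ) - 1)).filter (fun x => x ∈ A) with hF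
  have hdisj : ∀ i ∈ Finset.range k, ∀ j ∈ Finset.range k, i ≠ j →
      Disjoint (F.image (· + t i)) (F.image (· + t j)) := by
    intro i hi j hj hij
    rw [Finset.disjoint_left]
    rintro x hxi hxj
    obtain ⟨u, hu, hux⟩ := Finset.mem_image.mp hxi
    obtain ⟨v, hv, hvx⟩ := Finset.mem_image.mp hxj
    have hux' : u + t i = x := hux
    have hvx' : v + t j = x := hvx
    have huA : u ∈ A := (Finset.mem_filter.mp hu).2
    have hvA : v ∈ A := (Finset.mem_filter.mp hv).2
    rcases hij.lt_or_gt with hlt | hlt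
    · exact ht i j hlt (Finset.mem_range.mp hj) ⟨u, huA, v, hvA, by omega⟩
    · exact ht j i hlt (Finset.mem_range.mp hi) ⟨v, hvA, u, huA, by omega⟩
  have hcard : ((Finset.range k).biUnion (fun i => F.image (· + t i))).card = k * F.card := by
    rw [Finset.card_biUnion hdisj]
    rw [Finset.sum_congr rfl (fun i _ =>
      Finset.card_image_of_injective F (add_left_injective (t i)))]
    rw [Finset.sum_const, Finset.card_range, smul_eq_mul]
  have hsub : (Finset.range k).biUnion (fun i => F.image (· + t i)) ⊆
      Finset.Icc (a + mn) (a + (N : ℤ) - 1 + mx) := by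
    intro x hx
    obtain ⟨i, hi, hxi⟩ := Finset.mem_biUnion.mp hx
    obtain ⟨u, hu, hux⟩ := Finset.mem_image.mp hxi
    have hux' : u + t i = x := hux
    have hu' := Finset.mem_Icc.mp (Finset.mem_filter.mp hu).1
    have h1 : mn ≤ t i := Finset.min'_le _ _ (Finset.mem_image_of_mem t hi)
    have h2 : t i ≤ mx := Finset.le_max' _ _ (Finset.mem_image_of_mem t hi)
    rw [Finset.mem_Icc]
    omega
  calc k * F.card = ((Finset.range k).biUnion (fun i => F.image (· + t i))).card := hcard.symm
    _ ≤ (Finset.Icc (a + mn) (a + (N : ℤ) - 1 + mx)).card := Finset.card_le_card hsub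
    _ ≤ N + (mx - mn).toNat := by
        rw [Int.card_Icc]
        omega

/-- If `A ⊆ ℤ` has positive upper Banach density, then the difference set
`A − A = {a − b : a, b ∈ A}` is syndetic. -/
theorem syndetic_sub_of_pos_upperBanachDensity (A : Set ℤ)
    (h : 0 < upperBanachDensity A) :
    SyndeticZ { x : ℤ | ∃ a ∈ A, ∃ b ∈ A, x = a - b } := by
  classical
  by_contra hns
  have hgap : ∀ N : ℕ, 0 < N → ∃ a : ℤ,
      ∀ s ∈ { x : ℤ | ∃ a ∈ A, ∃ b ∈ A, x = a - b }, ¬(a ≤ s ∧ s < a + N) := by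
    intro N hN
    by_contra hc
    push_neg at hc
    exact hns ⟨N, hN, fun a => by
      obtain ⟨s, hs1, hs2⟩ := hc a
      exact ⟨s, hs1, hs2⟩⟩
  obtain ⟨n, hn⟩ := exists_nat_one_div_lt h
  set k : ℕ := n + 1 with hkdef
  obtain ⟨t, ht⟩ := exists_seq_avoiding _ hgap k
  obtain ⟨T, hT⟩ := key_count A k (Nat.succ_pos n) t ht
  have hkpos : (0 : ℝ) < k := by positivity
  -- the comparison function
  have h1 : Tendsto (fun N : ℕ => (1 : ℝ)/k + ((T : ℝ)/k) * (1/N)) atTop (nhds (1/k)) := by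
    have h0 : Tendsto (fun N : ℕ => (1 : ℝ)/N) atTop (nhds 0) :=
      tendsto_one_div_atTop_nhds_zero_nat
    simpa using tendsto_const_nhds.add (h0.const_mul ((T : ℝ)/k))
  have hub : upperBanachDensity A ≤ 1 / k := by
    unfold upperBanachDensity
    have hle : (fun N : ℕ =>
        ⨆ a : ℤ, (((Finset.Icc a (a + (N : ℤ) - 1)).filter (fun x => x ∈ A)).card : ℝ) / N)
        ≤ᶠ[atTop] fun N : ℕ => (1 : ℝ)/k + ((T : ℝ)/k) * (1/N) := by
      filter_upwards [eventually_ge_atTop 1] with N hN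
      apply ciSup_le
      intro a
      have hNpos : (0 : ℝ) < N := by exact_mod_cast hN
      have hcast : (k : ℝ) * ((Finset.Icc a (a + (N : ℤ) - 1)).filter
          (fun x => x ∈ A)).card ≤ N + T := by exact_mod_cast hT N a
      rw [div_le_iff₀ hNpos]
      have heq : ((1 : ℝ)/k + ((T : ℝ)/k) * (1/N)) * N = ((N : ℝ) + T)/k := by
        field_simp
      rw [heq, le_div_iff₀ hkpos]
      nlinarith
    have hcobdd : IsCoboundedUnder (· ≤ ·) atTop (fun N : ℕ =>
        ⨆ a : ℤ, (((Finset.Icc a (a + (N : ℤ) - 1)).filter (fun x => x ∈ A)).card : ℝ) / N) :=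
      isCoboundedUnder_le_of_le atTop (x := 0) (fun N =>
        Real.iSup_nonneg (fun a => by positivity))
    have hbdd : IsBoundedUnder (· ≤ ·) atTop
        (fun N : ℕ => (1 : ℝ)/k + ((T : ℝ)/k) * (1/N)) := h1.isBoundedUnder_le
    calc Filter.limsup (fun N : ℕ =>
          ⨆ a : ℤ, (((Finset.Icc a (a + (N : ℤ) - 1)).filter (fun x => x ∈ A)).card : ℝ) / N)
          atTop ≤ Filter.limsup (fun N : ℕ => (1 : ℝ)/k + ((T : ℝ)/k) * (1/N)) atTop :=
        limsup_le_limsup hle hcobdd hbdd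
      _ = 1/k := h1.limsup_eq
  have : (1 : ℝ) / (n + 1) < 1 / k := lt_of_lt_of_le hn hub
  rw [hkdef] at this
  push_cast at this
  linarith
end

section
/- Let ℱ be a collection of subsets of ℤ every member of which is syndetic. Then every strongly piecewise-ℱ subset of ℤ is syndetic. -/
/-- `A` is strongly piecewise-`F`. -/
def StronglyPW (F : Set (Set ℤ)) (A : Set ℤ) : Prop :=
  ∀ aJ bJ : ℕ → ℤ,
    Filter.Tendsto (fun k => bJ k - aJ k) Filter.atTop Filter.atTop →
    ∃ aI bI : ℕ → ℤ,
      (∀ j, ∃ k, Set.Icc (aI j) (bI j) ⊆ Set.Icc (aJ k) (bJ k)) ∧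
      Filter.Tendsto (fun j => bI j - aI j) Filter.atTop Filter.atTop ∧
      ∃ Λ ∈ F, ∀ j, Λ ∩ Set.Icc (aI j) (bI j) ⊆ A

/-- If every member of `F` is syndetic, then every strongly piecewise-`F` subset
of `ℤ` is syndetic. -/
theorem syndetic_of_stronglyPW (F : Set (Set ℤ)) (hF : ∀ B ∈ F, SyndeticZ B)
    (A : Set ℤ) (hA : StronglyPW F A) : SyndeticZ A := by
  by_contra hnot
  unfold SyndeticZ at hnot
  push_neg at hnot
  -- for each k, get an interval of length k+1 missing A
  have h : ∀ k : ℕ, ∃ a : ℤ, ∀ s ∈ A, a ≤ s → a + ((k:ℤ) + 1) ≤ s := by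
    intro k
    obtain ⟨a, ha⟩ := hnot (k + 1) (Nat.succ_pos k)
    exact ⟨a, fun s hs h1 => by have := ha s hs h1; push_cast at this; omega⟩
  choose aJ haJ using h
  have htendJ : Filter.Tendsto (fun k => (aJ k + k) - aJ k) Filter.atTop Filter.atTop := by
    have : (fun k : ℕ => (aJ k + k) - aJ k) = fun k : ℕ => (k : ℤ) := by
      funext k; ring
    rw [this]
    exact tendsto_natCast_atTop_atTop
  obtain ⟨aI, bI, hsub, htend, Λ, hΛF, hΛA⟩ := hA aJ (fun k => aJ k + k) htendJ
  obtain ⟨N, hN, hsyn⟩ := hF Λ hΛF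
  -- pick j with bI j - aI j ≥ N
  obtain ⟨j, hj⟩ := (htend.eventually (Filter.eventually_ge_atTop (N : ℤ))).exists
  obtain ⟨s, hsΛ, hs1, hs2⟩ := hsyn (aI j)
  have hsI : s ∈ Set.Icc (aI j) (bI j) := by
    constructor
    · exact hs1
    · have : (N : ℤ) ≤ bI j - aI j := hj
      omega
  have hsA : s ∈ A := hΛA j ⟨hsΛ, hsI⟩
  obtain ⟨k, hk⟩ := hsub j
  have hsJ : s ∈ Set.Icc (aJ k) (aJ k + k) := hk hsI
  have h1 := hsJ.1
  have h2 := hsJ.2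
  have := haJ k s hsA h1
  omega
end

section
/- Every strongly piecewise-Bohr₀ subset of ℤ is syndetic. -/
lemma IsBohr0.syndetic {A : Set ℤ} (h : IsBohr0 A) : SyndeticZ A := by
  obtain ⟨m, hm, α, U, hUo, hU0, hsub⟩ := h
  set φ : ℤ → (Fin m → AddCircle (1 : ℝ)) := fun n i => n • α i with hφ
  have hφ_sub : ∀ p q : ℤ, φ p - φ q = φ (p - q) := by
    intro p q; funext i; simp [hφ, sub_zsmul, sub_eq_add_neg, add_zsmul, neg_zsmul]
  set H := closure (Set.range φ) with hH
  have hHc : IsCompact H := isClosed_closure.isCompact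
  have hopen : ∀ n : ℤ, IsOpen ((fun x => x - φ n) ⁻¹' U) := by
    intro n
    exact hUo.preimage (continuous_sub_right _)
  have hcover : H ⊆ ⋃ n : ℤ, (fun x => x - φ n) ⁻¹' U := by
    intro x hx
    have hO : IsOpen ((fun y => x - y) ⁻¹' U) := hUo.preimage (continuous_const.sub continuous_id)
    have hxO : x ∈ (fun y => x - y) ⁻¹' U := by simp [hU0]
    obtain ⟨y, hy1, n, rfl⟩ := mem_closure_iff.mp hx _ hO hxO
    exact Set.mem_iUnion.mpr ⟨n, hy1⟩
  obtain ⟨t, ht⟩ := hHc.elim_finite_subcover _ hopen hcover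
  have h0H : φ 0 ∈ H := subset_closure ⟨0, rfl⟩
  have htne : t.Nonempty := by
    obtain ⟨n, hn, -⟩ := Set.mem_iUnion₂.mp (ht h0H)
    exact ⟨n, hn⟩
  set c := t.max' htne
  set d := t.min' htne
  have hdc : d ≤ c := t.min'_le _ (t.max'_mem htne)
  refine ⟨(c - d + 1).toNat, by omega, ?_⟩
  intro a
  have hq : φ (a + c) ∈ H := subset_closure ⟨a + c, rfl⟩
  obtain ⟨n, hn, hmem⟩ := Set.mem_iUnion₂.mp (ht hq)
  have hR : a + c - n ∈ A := by
    apply hsub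
    have : φ (a + c) - φ n ∈ U := hmem
    rw [hφ_sub] at this
    exact this
  have hnc : n ≤ c := t.le_max' _ hn
  have hnd : d ≤ n := t.min'_le _ hn
  exact ⟨a + c - n, hR, by omega, by omega⟩

/-- Every strongly piecewise-Bohr₀ subset of `ℤ` is syndetic. -/
theorem stronglyPW_bohr0_syndetic (A : Set ℤ)
    (hA : StronglyPW { B : Set ℤ | IsBohr0 B } A) : SyndeticZ A := by
  by_contra hsyn
  simp only [SyndeticZ, not_exists, not_and, not_forall] at hsyn
  have hbad : ∀ k : ℕ, ∃ a : ℤ, ∀ s ∈ A, ¬(a ≤ s ∧ s < a + (k + 1 : ℕ)) := by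
    intro k
    obtain ⟨a, ha⟩ := hsyn (k + 1) k.succ_pos
    refine ⟨a, fun s hs hcon => ?_⟩
    push_neg at ha
    exact absurd hcon.2 (not_lt.mpr (ha s hs hcon.1))
  choose aJ haJ using hbad
  obtain ⟨aI, bI, hsub, htend, Λ, hΛ, hinc⟩ :=
    hA aJ (fun k => aJ k + k) (by
      simpa using tendsto_natCast_atTop_atTop (R := ℤ))
  obtain ⟨N, hN, hsynd⟩ := IsBohr0.syndetic hΛ
  obtain ⟨j, hj⟩ := (htend.eventually_ge_atTop (N : ℤ)).exists
  obtain ⟨k, hk⟩ := hsub j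
  obtain ⟨s, hsΛ, hs1, hs2⟩ := hsynd (aI j)
  have hsI : s ∈ Set.Icc (aI j) (bI j) := ⟨hs1, by omega⟩
  have hsA : s ∈ A := hinc j ⟨hsΛ, hsI⟩
  have hsJ := hk hsI
  simp only [Set.mem_Icc] at hsJ
  exact haJ k s hsA ⟨hsJ.1, by push_cast; omega⟩
end

section
/- Let α be an irrational real number. Then there exists an infinite set S ⊆ ℕ such that for every n ∈ Δ(S), the distance from n²α to the nearest integer is at least 1/4. In particular, the set {n ∈ ℕ : ‖n²α‖ < 1/4} is not a Δ*-set. -/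
/-- `Δ(S) = {b − a : a, b ∈ S, b > a}` as a set of natural numbers. -/
def deltaN (S : Set ℕ) : Set ℕ :=
  { n | ∃ a ∈ S, ∃ b ∈ S, a < b ∧ n = b - a }

/-- `A ⊆ ℕ` is a `Δ*`-set: `A ∩ Δ(S) ≠ ∅` for every infinite `S ⊆ ℕ`. -/
def IsDeltaStarN (A : Set ℕ) : Prop :=
  ∀ S : Set ℕ, S.Infinite → (A ∩ deltaN S).Nonempty

noncomputable section
open Classical

local notation "𝕋" => AddCircle (1 : ℝ)

namespace DeltaAux

lemma fact1 : Fact ((0:ℝ) < 1) := ⟨zero_lt_one⟩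

attribute [local instance] fact1

lemma norm_coe (x : ℝ) : ‖(x : 𝕋)‖ = |x - round x| := by
  rw [AddCircle.norm_eq]; simp

lemma norm_coe_le_int (x : ℝ) (z : ℤ) : ‖(x : 𝕋)‖ ≤ |x - z| := by
  rw [norm_coe]; exact round_le x z

lemma norm_coe_le_abs (x : ℝ) : ‖(x : 𝕋)‖ ≤ |x| := by
  simpa using norm_coe_le_int x 0

lemma norm_coe_of_le_half (x : ℝ) (h : |x| ≤ 1/2) : ‖(x : 𝕋)‖ = |x| :=
  (AddCircle.norm_coe_eq_abs_iff (p := 1) one_ne_zero).2 (by simpa using h)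

lemma coe_int_eq_zero (z : ℤ) : (((z:ℝ)) : 𝕋) = 0 := by
  rw [AddCircle.coe_eq_zero_iff]
  exact ⟨z, by simp⟩

lemma coe_add_int (x : ℝ) (z : ℤ) : ((x + z : ℝ) : 𝕋) = (x : 𝕋) := by
  rw [AddCircle.coe_add, coe_int_eq_zero, add_zero]

lemma norm_coe_eq_one_sub (t : ℝ) (h1 : 1/2 ≤ t) (h2 : t ≤ 3/2) :
    ‖(t : 𝕋)‖ = |t - 1| := by
  have : ((t : ℝ) : 𝕋) = ((t - 1 : ℝ) : 𝕋) := by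
    rw [← coe_add_int (t-1) 1]; norm_num
  rw [this, norm_coe_of_le_half]
  rw [abs_le]; constructor <;> linarith

-- positivity of ‖qα‖ for irrational α
lemma norm_pos (α : ℝ) (hα : Irrational α) (q : ℕ) (hq : 1 ≤ q) :
    0 < ‖((q * α : ℝ) : 𝕋)‖ := by
  rcases eq_or_lt_of_le (norm_nonneg (((q * α : ℝ) : 𝕋))) with h | h
  · exfalso
    have h0 : ((q * α : ℝ) : 𝕋) = 0 := by
      rwa [eq_comm, norm_eq_zero] at h
    rw [AddCircle.coe_eq_zero_iff] at h0
    obtain ⟨n, hn⟩ := h0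
    have : α = (n : ℝ) / q := by
      field_simp
      simp only [zsmul_eq_mul, mul_one] at hn
      linarith [hn]
    exact hα ⟨(n : ℚ)/(q : ℚ), by push_cast [this]; ring⟩
  · exact h

-- Dirichlet: arbitrarily large q with small ‖qα‖
lemma dirichlet_infinite (α : ℝ) (hα : Irrational α) (ε : ℝ) (hε : 0 < ε) (M : ℕ) :
    ∃ q : ℕ, M ≤ q ∧ 1 ≤ q ∧ ‖((q * α : ℝ) : 𝕋)‖ < ε := by
  -- minimum of ‖qα‖ over 1 ≤ q ≤ M
  obtain ⟨c, hc_pos, hc⟩ : ∃ c > 0, ∀ q ∈ Finset.Icc 1 M, c ≤ ‖((q * α : ℝ) : 𝕋)‖ := by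
    rcases Finset.eq_empty_or_nonempty ((Finset.Icc 1 M).image
        (fun q : ℕ => ‖((q * α : ℝ) : 𝕋)‖)) with he | hne
    · refine ⟨1, one_pos, fun q hq => ?_⟩
      exfalso
      have := Finset.mem_image_of_mem (fun q : ℕ => ‖((q * α : ℝ) : 𝕋)‖) hq
      rw [he] at this; exact absurd this (Finset.notMem_empty _)
    · obtain ⟨b, hb_mem, hb_min⟩ := ((Finset.Icc 1 M).image
        (fun q : ℕ => ‖((q * α : ℝ) : 𝕋)‖)).exists_min_image id hne
      obtain ⟨q0, hq0, hq0b⟩ := Finset.mem_image.1 hb_mem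
      refine ⟨b, ?_, fun q hq => ?_⟩
      · rw [← hq0b]; exact norm_pos α hα q0 (Finset.mem_Icc.1 hq0).1
      · exact hb_min _ (Finset.mem_image_of_mem _ hq)
  obtain ⟨n, hn⟩ := exists_nat_one_div_lt (lt_min hε hc_pos)
  have hn_pos : 0 < n + 1 := Nat.succ_pos n
  obtain ⟨j, k, hk0, hkn, hjk⟩ := Real.exists_int_int_abs_mul_sub_le α hn_pos
  set q : ℕ := k.toNat with hq_def
  have hq1 : 1 ≤ q := by omega
  have hqr : ((q:ℝ)) = (k:ℝ) := by
    rw [hq_def]; exact_mod_cast congrArg (fun z : ℤ => (z : ℝ)) (Int.toNat_of_nonneg hk0.le)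
  have hsmall : ‖((q * α : ℝ) : 𝕋)‖ < min ε c := by
    have h1 : ‖((q * α : ℝ) : 𝕋)‖ ≤ |(q:ℝ) * α - j| := norm_coe_le_int _ j
    have h2 : |(q:ℝ) * α - j| ≤ 1 / ((n:ℝ) + 1 + 1) := by
      rw [hqr]
      have := hjk
      push_cast at this ⊢
      linarith [this]
    have h3 : (1:ℝ) / ((n:ℝ) + 1 + 1) < 1 / ((n:ℝ) + 1) := by
      apply div_lt_div_of_pos_left one_pos
      · positivity
      · linarith
    calc ‖((q * α : ℝ) : 𝕋)‖ ≤ |(q:ℝ) * α - j| := h1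
      _ ≤ 1 / ((n:ℝ) + 1 + 1) := h2
      _ < 1 / ((n:ℝ) + 1) := h3
      _ < min ε c := hn
  refine ⟨q, ?_, hq1, lt_of_lt_of_le hsmall (min_le_left _ _)⟩
  by_contra hqM
  push_neg at hqM
  have hge : c ≤ ‖((q * α : ℝ) : 𝕋)‖ := hc q (Finset.mem_Icc.2 ⟨hq1, le_of_lt hqM⟩)
  have hlt := lt_of_lt_of_le hsmall (min_le_right _ _)
  linarith

/-- `x` is a limit of `(Q² α : 𝕋)` along naturals `Q` with `‖Qα‖ → 0`, `Q → ∞`. -/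
def IsBohrLimit (α : ℝ) (x : 𝕋) : Prop :=
  ∀ ε : ℝ, 0 < ε → ∀ M : ℕ, ∃ Q : ℕ, M ≤ Q ∧ 1 ≤ Q ∧ ‖((Q * α : ℝ) : 𝕋)‖ < ε ∧
    ‖(((Q:ℝ)^2 * α : ℝ) : 𝕋) - x‖ < ε

/-- Cluster-point extraction: from a sequence of Bohr elements with values in a
closed set `F` we get a Bohr limit in `F`. -/
lemma exists_bohrLimit (α : ℝ) (Q : ℕ → ℕ)
    (h1 : ∀ i, i ≤ Q i) (h1' : ∀ i, 1 ≤ Q i)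
    (h2 : ∀ i, ‖((Q i * α : ℝ) : 𝕋)‖ ≤ 1/((i:ℝ)+1))
    (F : Set 𝕋) (hF : IsClosed F)
    (hv : ∀ i, (((Q i : ℝ)^2 * α : ℝ) : 𝕋) ∈ F) :
    ∃ x, IsBohrLimit α x ∧ x ∈ F := by
  set v : ℕ → 𝕋 := fun i => (((Q i : ℝ)^2 * α : ℝ) : 𝕋) with hv_def
  obtain ⟨x, φ, hφ, hlim⟩ := CompactSpace.tendsto_subseq v
  refine ⟨x, ?_, hF.mem_of_tendsto hlim (Filter.Eventually.of_forall fun i => hv _)⟩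
  intro ε hε M
  rw [Metric.tendsto_atTop] at hlim
  obtain ⟨N, hN⟩ := hlim ε hε
  obtain ⟨n0, hn0⟩ := exists_nat_one_div_lt hε
  set n := max (max N M) n0 with hn_def
  refine ⟨Q (φ n), ?_, h1' _, ?_, ?_⟩
  · calc M ≤ n := le_max_of_le_left (le_max_right _ _)
      _ ≤ φ n := hφ.le_apply
      _ ≤ Q (φ n) := h1 _
  · calc ‖((Q (φ n) * α : ℝ) : 𝕋)‖ ≤ 1/((φ n : ℝ)+1) := h2 _
      _ ≤ 1/((n0:ℝ)+1) := by
          apply div_le_div_of_nonneg_left one_pos.le (by positivity)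
          have : (n0 : ℝ) ≤ (φ n : ℝ) := by
            exact_mod_cast le_trans (le_max_right _ _) hφ.le_apply
          linarith
      _ < ε := hn0
  · have : dist (v (φ n)) x < ε := hN n (le_max_of_le_left (le_max_left _ _))
    rwa [dist_eq_norm] at this

/-- Bohr limits are closed under addition. -/
lemma IsBohrLimit.add {α : ℝ} {x y : 𝕋} (hx : IsBohrLimit α x) (hy : IsBohrLimit α y) :
    IsBohrLimit α (x + y) := by
  intro ε hε M
  obtain ⟨Q₁, hQ₁M, hQ₁1, hQ₁n, hQ₁v⟩ := hx (ε/3) (by linarith) M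
  have hpos : (0:ℝ) < ε / (3 * (2 * Q₁ + 1)) := by positivity
  obtain ⟨Q₂, hQ₂M, hQ₂1, hQ₂n, hQ₂v⟩ := hy (min (ε/3) (ε / (3 * (2 * Q₁ + 1)))) (by
    exact lt_min (by linarith) hpos) 1
  refine ⟨Q₁ + Q₂, le_trans hQ₁M (Nat.le_add_right _ _), by omega, ?_, ?_⟩
  · have : (((Q₁ + Q₂ : ℕ) * α : ℝ) : 𝕋) = ((Q₁ * α : ℝ) : 𝕋) + ((Q₂ * α : ℝ) : 𝕋) := by
      rw [← AddCircle.coe_add]; push_cast; ring_nf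
    rw [this]
    calc ‖((Q₁ * α : ℝ) : 𝕋) + ((Q₂ * α : ℝ) : 𝕋)‖
        ≤ ‖((Q₁ * α : ℝ) : 𝕋)‖ + ‖((Q₂ * α : ℝ) : 𝕋)‖ := norm_add_le _ _
      _ < ε/3 + ε/3 := by
          have := lt_of_lt_of_le hQ₂n (min_le_left _ _)
          exact add_lt_add hQ₁n this
      _ ≤ ε := by linarith
  · have key : ((((Q₁ + Q₂ : ℕ):ℝ)^2 * α : ℝ) : 𝕋)
        = (((Q₁:ℝ)^2 * α : ℝ) : 𝕋) + (((Q₂:ℝ)^2 * α : ℝ) : 𝕋)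
          + (2 * Q₁ : ℕ) • ((Q₂ * α : ℝ) : 𝕋) := by
      rw [← AddCircle.coe_nsmul, ← AddCircle.coe_add, ← AddCircle.coe_add]
      congr 1
      push_cast
      ring
    rw [key]
    have hcross : ‖(2 * Q₁ : ℕ) • ((Q₂ * α : ℝ) : 𝕋)‖ < ε/3 := by
      calc ‖(2 * Q₁ : ℕ) • ((Q₂ * α : ℝ) : 𝕋)‖
          ≤ (2 * Q₁ : ℕ) * ‖((Q₂ * α : ℝ) : 𝕋)‖ := norm_nsmul_le
        _ ≤ (2 * Q₁ + 1 : ℝ) * ‖((Q₂ * α : ℝ) : 𝕋)‖ := by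
            apply mul_le_mul_of_nonneg_right _ (norm_nonneg _)
            push_cast; linarith
        _ < (2 * Q₁ + 1 : ℝ) * (ε / (3 * (2 * Q₁ + 1))) := by
            apply mul_lt_mul_of_pos_left _ (by positivity)
            exact lt_of_lt_of_le hQ₂n (min_le_right _ _)
        _ = ε/3 := by field_simp
    calc ‖(((Q₁:ℝ)^2 * α : ℝ) : 𝕋) + (((Q₂:ℝ)^2 * α : ℝ) : 𝕋)
          + (2 * Q₁ : ℕ) • ((Q₂ * α : ℝ) : 𝕋) - (x + y)‖
        = ‖((((Q₁:ℝ)^2 * α : ℝ) : 𝕋) - x) + ((((Q₂:ℝ)^2 * α : ℝ) : 𝕋) - y)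
          + (2 * Q₁ : ℕ) • ((Q₂ * α : ℝ) : 𝕋)‖ := by congr 1; abel
      _ ≤ ‖((((Q₁:ℝ)^2 * α : ℝ) : 𝕋) - x) + ((((Q₂:ℝ)^2 * α : ℝ) : 𝕋) - y)‖
          + ‖(2 * Q₁ : ℕ) • ((Q₂ * α : ℝ) : 𝕋)‖ := norm_add_le _ _
      _ ≤ ‖(((Q₁:ℝ)^2 * α : ℝ) : 𝕋) - x‖ + ‖(((Q₂:ℝ)^2 * α : ℝ) : 𝕋) - y‖
          + ‖(2 * Q₁ : ℕ) • ((Q₂ * α : ℝ) : 𝕋)‖ := by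
            have := norm_add_le ((((Q₁:ℝ)^2 * α : ℝ) : 𝕋) - x) ((((Q₂:ℝ)^2 * α : ℝ) : 𝕋) - y)
            linarith
      _ < ε/3 + ε/3 + ε/3 := by
          have := lt_of_lt_of_le hQ₂v (min_le_left _ _)
          exact add_lt_add (add_lt_add hQ₁v this) hcross
      _ = ε := by ring

lemma IsBohrLimit.nsmul {α : ℝ} {x : 𝕋} (hx : IsBohrLimit α x) (n : ℕ) (hn : 1 ≤ n) :
    IsBohrLimit α (n • x) := by
  induction n with
  | zero => omega
  | succ m ih =>
    rcases Nat.eq_or_lt_of_le hn with h | h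
    · simpa [← h] using hx
    · have hm : 1 ≤ m := by omega
      have := (ih hm).add hx
      simpa [succ_nsmul] using this


/-- The first-crossing trick: if all Bohr limits `z` satisfy `‖2z‖ < 13/50`, then
every Bohr limit is killed by `2`. -/
lemma two_nsmul_eq_zero {α : ℝ}
    (hsmall : ∀ z : 𝕋, IsBohrLimit α z → ‖(2:ℕ) • z‖ < 13/50)
    {l : 𝕋} (hl : IsBohrLimit α l) : (2:ℕ) • l = 0 := by
  by_contra hy0
  set y : 𝕋 := (2:ℕ) • l with hy_def
  obtain ⟨x, hx⟩ : ∃ x : ℝ, (x : 𝕋) = y := by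
    induction y using QuotientAddGroup.induction_on with
    | H z => exact ⟨z, rfl⟩
  set s : ℝ := x - round x with hs_def
  have hsy : ((s : ℝ) : 𝕋) = y := by
    rw [hs_def, AddCircle.coe_sub, coe_int_eq_zero, ← hx, sub_zero]
  have hnorm_y : ‖y‖ = |s| := by rw [← hx, norm_coe]
  have hs_half : |s| ≤ 1/2 := abs_sub_round x
  have hs_ne : s ≠ 0 := by
    intro h
    apply hy0
    have : y = 0 := by rw [← hsy, h]; simp
    rwa [hy_def] at this
  have hs_pos : 0 < |s| := abs_pos.2 hs_ne
  have hs_lt : |s| < 13/50 := by rw [← hnorm_y]; exact hsmall l hl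
  have hex : ∃ n : ℕ, (3:ℝ)/10 < (n:ℝ) * |s| := by
    obtain ⟨n, hn⟩ := exists_nat_gt ((3:ℝ)/10 / |s|)
    refine ⟨n, ?_⟩
    rw [div_lt_iff₀ hs_pos] at hn
    linarith
  set n := Nat.find hex with hn_def
  have hn_spec : (3:ℝ)/10 < (n:ℝ) * |s| := Nat.find_spec hex
  have hn1 : 1 ≤ n := by
    by_contra h
    push_neg at h
    interval_cases n
    simp at hn_spec
    linarith
  have hn_min := Nat.find_min hex (show n - 1 < n by omega)
  push_neg at hn_min
  have hcast : ((n-1:ℕ):ℝ) = (n:ℝ) - 1 := by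
    have : (1:ℕ) ≤ n := hn1
    push_cast [this]
    ring
  have hupper : (n:ℝ) * |s| ≤ 3/10 + |s| := by
    rw [hcast] at hn_min
    nlinarith [abs_nonneg s]
  have hy_n : (n • y : 𝕋) = ((n * s : ℝ) : 𝕋) := by
    rw [← hsy, ← AddCircle.coe_nsmul]
    norm_num [nsmul_eq_mul]
  have habs : |(n:ℝ) * s| = (n:ℝ) * |s| := by rw [abs_mul, Nat.abs_cast]
  have hval1 : (3:ℝ)/10 < |(n:ℝ)*s| := by rw [habs]; exact hn_spec
  have hval2 : |(n:ℝ)*s| < 14/25 := by rw [habs]; linarith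
  have hnorm_big : (3:ℝ)/10 ≤ ‖(n • y : 𝕋)‖ := by
    rw [hy_n]
    rcases le_or_gt |(n:ℝ)*s| (1/2) with h | h
    · rw [show (((n:ℝ)*s : ℝ) : 𝕋) = (((n:ℝ)*s : ℝ) : 𝕋) from rfl,
        norm_coe_of_le_half _ h]
      linarith
    · have heq : ‖(((n:ℝ)*s : ℝ) : 𝕋)‖ = ‖((|(n:ℝ)*s| : ℝ) : 𝕋)‖ := by
        rcases abs_cases ((n:ℝ)*s) with ⟨h1,_⟩ | ⟨h1,_⟩
        · rw [h1]
        · rw [h1, AddCircle.coe_neg, norm_neg]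
      rw [heq, norm_coe_eq_one_sub _ (by linarith) (by linarith),
        abs_of_nonpos (by linarith)]
      linarith
  have hmem : IsBohrLimit α ((n:ℕ) • l) := hl.nsmul n hn1
  have hsm := hsmall _ hmem
  have hcomm : (2:ℕ) • ((n:ℕ) • l) = n • y := by rw [hy_def, smul_comm]
  rw [hcomm] at hsm
  linarith


set_option maxHeartbeats 1000000 in
/-- Quadratic first-crossing: from `q` with `q‖qα‖ ≤ 1/1000` produce a multiple `Q = m q`
whose square value sits in a window far from `0` after doubling. -/
lemma window_elt (α : ℝ) (hα : Irrational α) (q : ℕ) (hq : 1 ≤ q)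
    (hsmall : (q:ℝ) * ‖((q * α : ℝ) : 𝕋)‖ ≤ 1/1000) :
    ∃ Q : ℕ, q ≤ Q ∧ 1 ≤ Q ∧ ‖((Q * α : ℝ) : 𝕋)‖ ≤ 1/(q:ℝ) ∧
      13/40 ≤ ‖(2:ℕ) • (((Q:ℝ)^2 * α : ℝ) : 𝕋)‖ := by
  have hq_pos : (0:ℝ) < q := by exact_mod_cast hq
  set θ : ℝ := (q:ℝ) * α - round ((q:ℝ) * α) with hθ_def
  have hθ_norm : ‖((q * α : ℝ) : 𝕋)‖ = |θ| := norm_coe _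
  have hθ_pos : 0 < |θ| := by rw [← hθ_norm]; exact norm_pos α hα q hq
  set g : ℝ := (q:ℝ) * |θ| with hg_def
  have hg_pos : 0 < g := by positivity
  have hg_small : g ≤ 1/1000 := by rw [hg_def, ← hθ_norm]; exact hsmall
  have hex : ∃ m : ℕ, (3:ℝ)/10 < (m:ℝ)^2 * g := by
    obtain ⟨m, hm⟩ := exists_nat_gt ((3:ℝ)/10 / g + 1)
    refine ⟨m, ?_⟩
    have h1 : (3:ℝ)/10 / g < m := by linarith
    rw [div_lt_iff₀ hg_pos] at h1
    have hm1 : (1:ℝ) ≤ (m:ℝ) := by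
      have : (0:ℝ) ≤ (3:ℝ)/10 / g + 1 := by positivity
      have h2 : (1:ℝ) ≤ (3:ℝ)/10/g + 1 := by
        have : (0:ℝ) ≤ (3:ℝ)/10/g := by positivity
        linarith
      linarith
    nlinarith
  set m := Nat.find hex with hm_def
  have hm_spec : (3:ℝ)/10 < (m:ℝ)^2 * g := Nat.find_spec hex
  have hm1 : 1 ≤ m := by
    by_contra h
    push_neg at h
    interval_cases m
    simp at hm_spec
    linarith
  have hm_min := Nat.find_min hex (show m - 1 < m by omega)
  push_neg at hm_min
  have hcast : ((m-1:ℕ):ℝ) = (m:ℝ) - 1 := by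
    have : (1:ℕ) ≤ m := hm1
    push_cast [this]
    ring
  set a : ℝ := (m:ℝ) - 1 with ha_def
  have ha_nonneg : 0 ≤ a := by
    have : (1:ℝ) ≤ (m:ℝ) := by exact_mod_cast hm1
    linarith
  have ha : a^2 * g ≤ 3/10 := by rw [← hcast] at *; exact hm_min
  have hag2 : (a*g)^2 ≤ 3/10000 := by nlinarith
  have hag : a*g ≤ 18/1000 := by nlinarith [sq_nonneg (a*g - 18/1000)]
  have hmg : (m:ℝ) * g ≤ 19/1000 := by
    have : (m:ℝ) = a + 1 := by rw [ha_def]; ring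
    rw [this]
    nlinarith
  have hm2g_hi : (m:ℝ)^2 * g ≤ 337/1000 := by
    have hma : (m:ℝ) = a + 1 := by rw [ha_def]; ring
    rw [hma]
    nlinarith
  clear_value m
  refine ⟨m * q, Nat.le_mul_of_pos_left q (by omega), Nat.mul_pos (by omega) (by omega), ?_, ?_⟩
  · -- ‖(mq)α‖ ≤ 1/q
    have hreal : ((m*q : ℕ) : ℝ) * α = (m:ℝ) * θ + (((m:ℤ) * round ((q:ℝ)*α) : ℤ) : ℝ) := by
      rw [hθ_def]; push_cast; ring
    have hrw : (((m*q : ℕ) * α : ℝ) : 𝕋) = (((m:ℝ) * θ : ℝ) : 𝕋) := by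
      rw [hreal]; exact coe_add_int _ _
    rw [hrw]
    calc ‖(((m:ℝ) * θ : ℝ) : 𝕋)‖ ≤ |(m:ℝ) * θ| := norm_coe_le_abs _
      _ = (m:ℝ) * |θ| := by rw [abs_mul, Nat.abs_cast]
      _ = ((m:ℝ) * g) / q := by rw [hg_def]; field_simp
      _ ≤ (19/1000) / q := by gcongr
      _ ≤ 1 / q := by gcongr <;> norm_num
  · -- value window
    set γ : ℝ := (q:ℝ) * θ with hγ_def
    have hγ_abs : |γ| = g := by rw [hγ_def, hg_def, abs_mul, abs_of_pos hq_pos]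
    have hreal : (((m*q : ℕ):ℝ))^2 * α = (m:ℝ)^2 * γ
        + (((((m^2 * q : ℕ) : ℤ)) * round ((q:ℝ)*α) : ℤ) : ℝ) := by
      rw [hγ_def, hθ_def]; push_cast; ring
    have hrw : ((((m*q : ℕ):ℝ)^2 * α : ℝ) : 𝕋) = (((m:ℝ)^2 * γ : ℝ) : 𝕋) := by
      rw [hreal]; exact coe_add_int _ _
    rw [hrw]
    have h2smul : (2:ℕ) • ((((m:ℝ)^2 * γ : ℝ)) : 𝕋) = ((2 * ((m:ℝ)^2 * γ) : ℝ) : 𝕋) := by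
      rw [← AddCircle.coe_nsmul]
      norm_num [nsmul_eq_mul]
    rw [h2smul]
    have habs_eq : ‖((2 * ((m:ℝ)^2 * γ) : ℝ) : 𝕋)‖ = ‖((|2 * ((m:ℝ)^2 * γ)| : ℝ) : 𝕋)‖ := by
      rcases abs_cases (2 * ((m:ℝ)^2 * γ)) with ⟨h1,_⟩ | ⟨h1,_⟩
      · rw [h1]
      · rw [h1, AddCircle.coe_neg, norm_neg]
    have habs_val : |2 * ((m:ℝ)^2 * γ)| = 2 * ((m:ℝ)^2 * g) := by
      rw [abs_mul, abs_mul, hγ_abs, abs_two, abs_of_nonneg (by positivity : (0:ℝ) ≤ (m:ℝ)^2)]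
    clear_value θ g γ
    clear hm_def hex
    rw [habs_eq, habs_val,
      norm_coe_eq_one_sub (2 * ((m:ℝ)^2 * g)) (by linarith) (by linarith),
      abs_of_nonpos (by linarith)]
    linarith


lemma closed_norm_ge (r : ℝ) : IsClosed {z : 𝕋 | r ≤ ‖(2:ℕ) • z‖} := by
  have hcont : Continuous fun z : 𝕋 => ‖(2:ℕ) • z‖ := (continuous_nsmul 2 : Continuous fun z : 𝕋 => (2:ℕ) • z).norm
  exact isClosed_le continuous_const hcont

set_option maxHeartbeats 2000000 in
/-- The central dichotomy: there is a Bohr limit `c` with `‖2c‖ ≥ 13/50`. -/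
lemma exists_good (α : ℝ) (hα : Irrational α) :
    ∃ c : 𝕋, IsBohrLimit α c ∧ 13/50 ≤ ‖(2:ℕ) • c‖ := by
  by_contra hcon
  push_neg at hcon
  have hcon' : ∀ c : 𝕋, IsBohrLimit α c → ‖(2:ℕ) • c‖ < 13/50 := by
    intro c hc
    exact hcon c hc
  have hkill : ∀ c : 𝕋, IsBohrLimit α c → (2:ℕ) • c = 0 :=
    fun c hc => two_nsmul_eq_zero hcon' hc
  by_cases hsp : ∀ η : ℝ, 0 < η → ∃ q : ℕ, 1 ≤ q ∧ (q:ℝ) * ‖((q * α : ℝ) : 𝕋)‖ < η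
  · -- liminf q‖qα‖ = 0 : quadratic gap gives a window Bohr limit
    have hQ : ∀ i : ℕ, ∃ Q : ℕ, i ≤ Q ∧ 1 ≤ Q ∧ ‖((Q * α : ℝ) : 𝕋)‖ ≤ 1/((i:ℝ)+1) ∧
        13/40 ≤ ‖(2:ℕ) • (((Q:ℝ)^2 * α : ℝ) : 𝕋)‖ := by
      intro i
      obtain ⟨c0, hc0pos, hc0⟩ : ∃ c0 > 0, ∀ q ∈ Finset.Icc 1 i,
          c0 ≤ (q:ℝ) * ‖((q * α : ℝ) : 𝕋)‖ := by
        rcases Finset.eq_empty_or_nonempty ((Finset.Icc 1 i).image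
            (fun q : ℕ => (q:ℝ) * ‖((q * α : ℝ) : 𝕋)‖)) with he | hne
        · refine ⟨1, one_pos, fun q hq => ?_⟩
          exfalso
          have := Finset.mem_image_of_mem (fun q : ℕ => (q:ℝ) * ‖((q * α : ℝ) : 𝕋)‖) hq
          rw [he] at this; exact absurd this (Finset.notMem_empty _)
        · obtain ⟨b, hb_mem, hb_min⟩ := ((Finset.Icc 1 i).image
            (fun q : ℕ => (q:ℝ) * ‖((q * α : ℝ) : 𝕋)‖)).exists_min_image id hne
          obtain ⟨q0, hq0, hq0b⟩ := Finset.mem_image.1 hb_mem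
          refine ⟨b, ?_, fun q hq => ?_⟩
          · rw [← hq0b]
            have h1 : (1:ℕ) ≤ q0 := (Finset.mem_Icc.1 hq0).1
            have := norm_pos α hα q0 h1
            have hq0pos : (0:ℝ) < q0 := by exact_mod_cast h1
            positivity
          · exact hb_min _ (Finset.mem_image_of_mem _ hq)
      obtain ⟨q, hq1, hqv⟩ := hsp (min c0 (1/1000)) (by positivity)
      have hqi : i < q := by
        by_contra h
        push_neg at h
        have := hc0 q (Finset.mem_Icc.2 ⟨hq1, h⟩)
        have := lt_of_lt_of_le hqv (min_le_left _ _)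
        linarith
      obtain ⟨Q, hQq, hQ1, hQn, hQv⟩ := window_elt α hα q hq1
        (le_of_lt (lt_of_lt_of_le hqv (min_le_right _ _)))
      refine ⟨Q, by omega, hQ1, le_trans hQn ?_, hQv⟩
      have hiq : (i:ℝ) + 1 ≤ (q:ℝ) := by exact_mod_cast hqi
      have hq_pos : (0:ℝ) < q := by exact_mod_cast hq1
      apply div_le_div_of_nonneg_left one_pos.le (by positivity)
      exact hiq
    choose Q h1 h2 h3 h4 using hQ
    obtain ⟨x, hx, hxF⟩ := exists_bohrLimit α Q h1 h2 h3 _ (closed_norm_ge (13/40)) h4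
    have h0 := hkill x hx
    rw [Set.mem_setOf_eq, h0, norm_zero] at hxF
    linarith
  · -- bounded case: q‖qα‖ ≥ δ for all q
    push_neg at hsp
    obtain ⟨η, hη_pos, hη⟩ := hsp
    set δ : ℝ := min η (1/2) with hδ_def
    have hδ_pos : 0 < δ := lt_min hη_pos (by norm_num)
    have hδ_half : δ ≤ 1/2 := min_le_right _ _
    have hδ : ∀ q : ℕ, 1 ≤ q → δ ≤ (q:ℝ) * ‖((q * α : ℝ) : 𝕋)‖ := by
      intro q hq
      exact le_trans (min_le_left _ _) (hη q hq)
    clear_value δ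
    clear hδ_def
    -- quantitative claim from `hkill`
    have claim : ∀ ρ : ℝ, 0 < ρ → ∃ ε : ℝ, 0 < ε ∧ ∀ Q : ℕ, 1 ≤ Q → 1/ε ≤ (Q:ℝ) →
        ‖((Q*α:ℝ):𝕋)‖ ≤ ε → ‖(2:ℕ) • (((Q:ℝ)^2*α:ℝ):𝕋)‖ < ρ := by
      intro ρ hρ
      by_contra hcl
      push_neg at hcl
      have hseq : ∀ i : ℕ, ∃ Q : ℕ, i ≤ Q ∧ 1 ≤ Q ∧ ‖((Q*α:ℝ):𝕋)‖ ≤ 1/((i:ℝ)+1) ∧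
          ρ ≤ ‖(2:ℕ) • (((Q:ℝ)^2*α:ℝ):𝕋)‖ := by
        intro i
        obtain ⟨Q, hq1, hq2, hq3, hq4⟩ := hcl (1/((i:ℝ)+1)) (by positivity)
        have hiQ : (i:ℝ) + 1 ≤ (Q:ℝ) := by
          rw [one_div_one_div] at hq2
          exact hq2
        have : i ≤ Q := by exact_mod_cast le_trans (by linarith : (i:ℝ) ≤ (i:ℝ)+1) hiQ
        exact ⟨Q, this, hq1, hq3, hq4⟩
      choose Q h1 h2 h3 h4 using hseq
      obtain ⟨x, hx, hxF⟩ := exists_bohrLimit α Q h1 h2 h3 _ (closed_norm_ge ρ) h4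
      have h0 := hkill x hx
      rw [Set.mem_setOf_eq, h0, norm_zero] at hxF
      linarith
    obtain ⟨ε, hε_pos, hclaim⟩ := claim (δ^2/18) (by positivity)
    set K : ℕ := ⌈(8:ℝ)/δ⌉₊ with hK_def
    have hK8 : (8:ℝ)/δ ≤ K := Nat.le_ceil _
    have hK9 : (K:ℝ) ≤ 9/δ := by
      have h1 : (K:ℝ) < 8/δ + 1 := Nat.ceil_lt_add_one (by positivity)
      have h2 : (1:ℝ) ≤ 1/δ := by
        rw [le_div_iff₀ hδ_pos]; linarith
      have e1 : (8:ℝ)/δ = 8*(1/δ) := by ring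
      have e2 : (9:ℝ)/δ = 9*(1/δ) := by ring
      linarith
    have hK1 : 1 ≤ K := by
      have : (0:ℝ) < 8/δ := by positivity
      have := hK8
      by_contra h
      push_neg at h
      interval_cases K
      simp at this
      linarith
    clear_value K
    clear hK_def
    -- choose q
    obtain ⟨q, hqM, hq1, hqn⟩ := dirichlet_infinite α hα (ε/2) (by positivity) ⌈(2:ℝ)/ε⌉₊
    have hq2e : (2:ℝ)/ε ≤ (q:ℝ) := le_trans (Nat.le_ceil _) (by exact_mod_cast hqM)
    have hq_pos : (0:ℝ) < q := by exact_mod_cast hq1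
    -- Dirichlet in range
    have hKq_pos : 0 < K * q := Nat.mul_pos hK1 hq1
    obtain ⟨j, k, hk0, hkn, hjk⟩ := Real.exists_int_int_abs_mul_sub_le α hKq_pos
    set q' : ℕ := k.toNat with hq'_def
    have hq'1 : 1 ≤ q' := by omega
    have hq'r : ((q':ℝ)) = (k:ℝ) := by
      rw [hq'_def]; exact_mod_cast congrArg (fun z : ℤ => (z : ℝ)) (Int.toNat_of_nonneg hk0.le)
    have hq'_le : (q':ℝ) ≤ (K*q : ℕ) := by
      rw [hq'r]; exact_mod_cast hkn
    clear_value q'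
    clear hq'_def
    have hKq_posr : (0:ℝ) < (K*q:ℕ) := by exact_mod_cast hKq_pos
    have hq'n : ‖((q' * α : ℝ) : 𝕋)‖ < 1/((K*q:ℕ):ℝ) := by
      calc ‖((q' * α : ℝ) : 𝕋)‖ ≤ |(q':ℝ) * α - j| := norm_coe_le_int _ j
        _ = |(k:ℝ) * α - j| := by rw [hq'r]
        _ ≤ 1 / (((K*q:ℕ):ℝ) + 1) := by exact_mod_cast hjk
        _ < 1 / ((K*q:ℕ):ℝ) := by
            apply div_lt_div_of_pos_left one_pos hKq_posr
            linarith
    have hq'_lb : δ * ((K*q:ℕ):ℝ) < (q':ℝ) := by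
      have h1 : δ ≤ (q':ℝ) * ‖((q' * α : ℝ) : 𝕋)‖ := hδ q' hq'1
      have hq'_posr : (0:ℝ) < q' := by exact_mod_cast hq'1
      have h2 : (q':ℝ) * ‖((q' * α : ℝ) : 𝕋)‖ < (q':ℝ) * (1/((K*q:ℕ):ℝ)) :=
        mul_lt_mul_of_pos_left hq'n hq'_posr
      rw [mul_one_div] at h2
      have h3 : δ < (q':ℝ)/((K*q:ℕ):ℝ) := lt_of_le_of_lt h1 h2
      exact (lt_div_iff₀ hKq_posr).1 h3
    -- basic real bounds
    have hq'_posr : (0:ℝ) < q' := by exact_mod_cast hq'1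
    have hKr_pos : (0:ℝ) < K := by
      have : (0:ℝ) < 8/δ := by positivity
      linarith [hK8]
    have hqq' : (8:ℝ) * q ≤ q' := by
      have h8 : (8:ℝ) ≤ δ * K := by
        have : δ * (8/δ) ≤ δ * K := mul_le_mul_of_nonneg_left hK8 hδ_pos.le
        calc (8:ℝ) = δ * (8/δ) := by field_simp
          _ ≤ δ * K := this
      have : (8:ℝ) * q ≤ (δ * K) * q := mul_le_mul_of_nonneg_right h8 hq_pos.le
      have hcast : δ * ((K*q:ℕ):ℝ) = (δ * K) * q := by push_cast; ring
      linarith [hq'_lb, hcast ▸ hq'_lb]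
    have h1e : (1:ℝ)/ε ≤ 2/ε := by gcongr <;> norm_num
    have hq_ge : (1:ℝ)/ε ≤ q := le_trans h1e hq2e
    have hK1r : (1:ℝ) ≤ (K:ℝ) := by exact_mod_cast hK1
    have hKq_ge_q : (q:ℝ) ≤ ((K*q:ℕ):ℝ) := by
      push_cast
      nlinarith [hq_pos]
    have h1Kq : (1:ℝ)/((K*q:ℕ):ℝ) ≤ ε/2 := by
      have h2q : (2:ℝ) ≤ ε * q := by
        rw [div_le_iff₀ hε_pos] at hq2e
        linarith
      rw [div_le_iff₀ hKq_posr]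
      nlinarith [hKq_ge_q, hε_pos]
    -- three claim applications
    have hA1 : ‖(2:ℕ) • (((q:ℝ)^2*α:ℝ):𝕋)‖ < δ^2/18 :=
      hclaim q hq1 hq_ge (by linarith)
    have hA2 : ‖(2:ℕ) • (((q':ℝ)^2*α:ℝ):𝕋)‖ < δ^2/18 := by
      apply hclaim q' hq'1
      · linarith
      · calc ‖((q' * α : ℝ) : 𝕋)‖ ≤ 1/((K*q:ℕ):ℝ) := hq'n.le
          _ ≤ ε/2 := h1Kq
          _ ≤ ε := by linarith
    have hsplit : (((q+q' : ℕ) * α : ℝ) : 𝕋) = ((q * α : ℝ) : 𝕋) + ((q' * α : ℝ) : 𝕋) := by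
      rw [← AddCircle.coe_add]
      push_cast
      ring_nf
    have hA3 : ‖(2:ℕ) • ((((q+q':ℕ):ℝ)^2*α:ℝ):𝕋)‖ < δ^2/18 := by
      apply hclaim (q+q') (by omega)
      · push_cast
        linarith
      · rw [hsplit]
        calc ‖((q * α : ℝ) : 𝕋) + ((q' * α : ℝ) : 𝕋)‖
            ≤ ‖((q * α : ℝ) : 𝕋)‖ + ‖((q' * α : ℝ) : 𝕋)‖ := norm_add_le _ _
          _ ≤ ε/2 + ε/2 := by
              have := le_trans hq'n.le h1Kq
              linarith
          _ = ε := by ring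
    -- the identity
    have hid : ((4*(q:ℝ)*(q':ℝ)*α : ℝ) : 𝕋) = (2:ℕ) • ((((q+q':ℕ):ℝ)^2*α:ℝ):𝕋)
        - (2:ℕ) • (((q:ℝ)^2*α:ℝ):𝕋) - (2:ℕ) • (((q':ℝ)^2*α:ℝ):𝕋) := by
      rw [← AddCircle.coe_nsmul, ← AddCircle.coe_nsmul, ← AddCircle.coe_nsmul,
        ← AddCircle.coe_sub, ← AddCircle.coe_sub]
      congr 1
      push_cast
      ring
    have hup : ‖((4*(q:ℝ)*(q':ℝ)*α : ℝ) : 𝕋)‖ < δ^2/6 := by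
      rw [hid]
      have t1 := norm_sub_le ((2:ℕ) • ((((q+q':ℕ):ℝ)^2*α:ℝ):𝕋) - (2:ℕ) • (((q:ℝ)^2*α:ℝ):𝕋))
        ((2:ℕ) • (((q':ℝ)^2*α:ℝ):𝕋))
      have t2 := norm_sub_le ((2:ℕ) • ((((q+q':ℕ):ℝ)^2*α:ℝ):𝕋)) ((2:ℕ) • (((q:ℝ)^2*α:ℝ):𝕋))
      calc ‖(2:ℕ) • ((((q+q':ℕ):ℝ)^2*α:ℝ):𝕋) - (2:ℕ) • (((q:ℝ)^2*α:ℝ):𝕋)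
            - (2:ℕ) • (((q':ℝ)^2*α:ℝ):𝕋)‖
          ≤ ‖(2:ℕ) • ((((q+q':ℕ):ℝ)^2*α:ℝ):𝕋) - (2:ℕ) • (((q:ℝ)^2*α:ℝ):𝕋)‖
            + ‖(2:ℕ) • (((q':ℝ)^2*α:ℝ):𝕋)‖ := t1
        _ ≤ ‖(2:ℕ) • ((((q+q':ℕ):ℝ)^2*α:ℝ):𝕋)‖ + ‖(2:ℕ) • (((q:ℝ)^2*α:ℝ):𝕋)‖
            + ‖(2:ℕ) • (((q':ℝ)^2*α:ℝ):𝕋)‖ := by linarith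
        _ < δ^2/18 + δ^2/18 + δ^2/18 := by linarith
        _ = δ^2/6 := by ring
    -- direct computation of the same norm
    set θ' : ℝ := (q':ℝ)*α - round ((q':ℝ)*α) with hθ'_def
    have hθ'_norm : ‖((q'*α:ℝ):𝕋)‖ = |θ'| := norm_coe _
    have hreal : 4*(q:ℝ)*(q':ℝ)*α = 4*(q:ℝ)*θ' + ((((4*q:ℕ):ℤ) * round ((q':ℝ)*α) : ℤ) : ℝ) := by
      rw [hθ'_def]
      push_cast
      ring
    have hXcoe : ((4*(q:ℝ)*(q':ℝ)*α : ℝ) : 𝕋) = ((4*(q:ℝ)*θ' : ℝ) : 𝕋) := by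
      rw [hreal]
      exact coe_add_int _ _
    have ht_nonneg : 0 ≤ |θ'| := abs_nonneg _
    have hX_up : |4*(q:ℝ)*θ'| < δ/2 := by
      have habs : |4*(q:ℝ)*θ'| = 4*(q:ℝ)*|θ'| := by
        rw [abs_mul]
        rw [abs_of_nonneg (by positivity : (0:ℝ) ≤ 4*(q:ℝ))]
      rw [habs]
      have hstep : 4*(q:ℝ)*|θ'| < 4*(q:ℝ)*(1/((K*q:ℕ):ℝ)) := by
        apply mul_lt_mul_of_pos_left _ (by positivity)
        rw [← hθ'_norm]
        exact hq'n
      have heq : 4*(q:ℝ)*(1/((K*q:ℕ):ℝ)) = 4/(K:ℝ) := by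
        push_cast
        field_simp
      have h4K : (4:ℝ)/(K:ℝ) ≤ δ/2 := by
        have h48 : (4:ℝ)/(K:ℝ) ≤ 4/((8:ℝ)/δ) := by
          apply div_le_div_of_nonneg_left (by norm_num) (by positivity) hK8
        have : (4:ℝ)/((8:ℝ)/δ) = δ/2 := by field_simp; ring
        linarith
      linarith [hstep, heq ▸ hstep]
    have hX_lo : 4*δ^2/9 ≤ |4*(q:ℝ)*θ'| := by
      have habs : |4*(q:ℝ)*θ'| = 4*((q:ℝ)*|θ'|) := by
        rw [abs_mul, abs_of_nonneg (by positivity : (0:ℝ) ≤ 4*(q:ℝ))]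
        ring
      rw [habs]
      have hδq' : δ ≤ (q':ℝ) * |θ'| := by
        rw [← hθ'_norm]
        exact hδ q' hq'1
      have hq'K : (q':ℝ) ≤ (K:ℝ)*q := by
        push_cast at hq'_le
        linarith
      have hKrq : δ ≤ (K:ℝ)*q*|θ'| := by
        nlinarith
      have hKδ : (K:ℝ)*δ ≤ 9 := by
        have := mul_le_mul_of_nonneg_left hK9 hδ_pos.le
        calc (K:ℝ)*δ = δ*(K:ℝ) := by ring
          _ ≤ δ*(9/δ) := this
          _ = 9 := by field_simp
      nlinarith [mul_le_mul_of_nonneg_left hKrq hδ_pos.le]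
    have hnormX : ‖((4*(q:ℝ)*θ' : ℝ) : 𝕋)‖ = |4*(q:ℝ)*θ'| := by
      apply norm_coe_of_le_half
      linarith
    rw [hXcoe, hnormX] at hup
    nlinarith [hδ_pos]


set_option maxHeartbeats 1000000 in
/-- The main construction: an infinite set all of whose difference squares are
far from the integers. -/
lemma main_construction (α : ℝ) (hα : Irrational α) :
    ∃ S : Set ℕ, S.Infinite ∧
      ∀ n ∈ deltaN S, (1:ℝ)/4 ≤ ‖(((n:ℝ)^2 * α : ℝ) : 𝕋)‖ := by
  obtain ⟨c, hc, hc26⟩ := exists_good α hα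
  have step : ∀ prev : ℕ, ∃ Q : ℕ, prev < Q ∧
      ‖((Q*α:ℝ):𝕋)‖ < 1/(1000*((prev:ℝ)+1)) ∧
      ‖(((Q:ℝ)^2*α:ℝ):𝕋) - c‖ < 1/1000 := by
    intro prev
    obtain ⟨Q, hQM, hQ1, hQn, hQv⟩ := hc (min (1/(1000*((prev:ℝ)+1))) (1/1000))
      (by positivity) (prev+1)
    exact ⟨Q, by omega, lt_of_lt_of_le hQn (min_le_left _ _),
      lt_of_lt_of_le hQv (min_le_right _ _)⟩
  choose f hf1 hf2 hf3 using step
  set Qs : ℕ → ℕ := fun n => Nat.rec (f 0) (fun _ prev => f prev) n with hQs_def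
  have hQs0 : Qs 0 = f 0 := rfl
  have hQsS : ∀ n, Qs (n+1) = f (Qs n) := fun n => rfl
  have hmono : StrictMono Qs := by
    apply strictMono_nat_of_lt_succ
    intro n
    rw [hQsS]
    exact hf1 (Qs n)
  have hval : ∀ n, ‖(((Qs n : ℝ)^2*α:ℝ):𝕋) - c‖ < 1/1000 := by
    intro n
    cases n with
    | zero => exact hf3 0
    | succ m => exact hf3 (Qs m)
  have hnorm : ∀ i j, i < j → ‖((Qs j * α : ℝ):𝕋)‖ < 1/(1000*((Qs i : ℝ)+1)) := by
    intro i j hij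
    obtain ⟨m, rfl⟩ : ∃ m, j = m + 1 := ⟨j - 1, by omega⟩
    have him : i ≤ m := by omega
    have hQim : Qs i ≤ Qs m := hmono.le_iff_le.2 him
    have hQimr : (Qs i : ℝ) ≤ (Qs m : ℝ) := by exact_mod_cast hQim
    calc ‖((Qs (m+1) * α : ℝ):𝕋)‖ < 1/(1000*((Qs m : ℝ)+1)) := by
          rw [hQsS]; exact hf2 (Qs m)
      _ ≤ 1/(1000*((Qs i : ℝ)+1)) := by
          apply div_le_div_of_nonneg_left one_pos.le (by positivity)
          have h0 : (0:ℝ) ≤ (Qs i : ℝ) := by positivity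
          nlinarith
  have hcross : ∀ i j, i < j → ‖((2 * Qs i * Qs j * α : ℝ):𝕋)‖ ≤ 1/500 := by
    intro i j hij
    have hQi_pos : (0:ℝ) ≤ (Qs i : ℝ) := by positivity
    have hrw : ((2 * (Qs i:ℝ) * Qs j * α : ℝ):𝕋) = (2 * Qs i : ℕ) • ((Qs j * α : ℝ):𝕋) := by
      rw [← AddCircle.coe_nsmul]
      congr 1
      push_cast
      ring
    rw [hrw]
    calc ‖(2 * Qs i : ℕ) • ((Qs j * α : ℝ):𝕋)‖
        ≤ ((2 * Qs i : ℕ):ℝ) * ‖((Qs j * α : ℝ):𝕋)‖ := norm_nsmul_le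
      _ ≤ ((2 * Qs i : ℕ):ℝ) * (1/(1000*((Qs i : ℝ)+1))) := by
          apply mul_le_mul_of_nonneg_left (hnorm i j hij).le (by positivity)
      _ ≤ 1/500 := by
          push_cast
          have h : 2*(Qs i:ℝ) * (1/(1000*((Qs i:ℝ)+1))) = (2*(Qs i:ℝ))/(1000*((Qs i:ℝ)+1)) := by
            ring
          rw [h, div_le_div_iff₀ (by positivity) (by norm_num)]
          nlinarith
  refine ⟨Set.range Qs, Set.infinite_range_of_injective hmono.injective, ?_⟩
  rintro n ⟨a, ⟨i, rfl⟩, b, ⟨j, rfl⟩, hab, rfl⟩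
  have hij : i < j := hmono.lt_iff_lt.1 hab
  have hcast : ((Qs j - Qs i : ℕ) : ℝ) = (Qs j : ℝ) - (Qs i : ℝ) := by
    exact_mod_cast Nat.cast_sub hab.le
  have hreal : ((Qs j - Qs i : ℕ) : ℝ)^2 * α
      = (Qs j:ℝ)^2*α + ((Qs i:ℝ)^2*α - 2*(Qs i:ℝ)*(Qs j:ℝ)*α) := by
    rw [hcast]; ring
  have hsplit : ((((Qs j - Qs i : ℕ) : ℝ)^2 * α : ℝ) : 𝕋)
      = (((Qs j:ℝ)^2*α : ℝ) : 𝕋) + (((Qs i:ℝ)^2*α : ℝ) : 𝕋)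
        - ((2*(Qs i:ℝ)*(Qs j:ℝ)*α : ℝ) : 𝕋) := by
    rw [hreal, AddCircle.coe_add, AddCircle.coe_sub]
    abel
  rw [hsplit]
  set vj := (((Qs j:ℝ)^2*α : ℝ) : 𝕋)
  set vi := (((Qs i:ℝ)^2*α : ℝ) : 𝕋)
  set w := ((2*(Qs i:ℝ)*(Qs j:ℝ)*α : ℝ) : 𝕋)
  have hdiff : vj + vi - w - (2:ℕ) • c = (vj - c) + (vi - c) - w := by
    rw [two_nsmul]
    abel
  have hbound : ‖vj + vi - w - (2:ℕ) • c‖ ≤ 1/1000 + 1/1000 + 1/500 := by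
    rw [hdiff]
    calc ‖(vj - c) + (vi - c) - w‖ ≤ ‖(vj - c) + (vi - c)‖ + ‖w‖ := norm_sub_le _ _
      _ ≤ ‖vj - c‖ + ‖vi - c‖ + ‖w‖ := by
          linarith [norm_add_le (vj - c) (vi - c)]
      _ ≤ 1/1000 + 1/1000 + 1/500 := by
          have h1 := hval j
          have h2 := hval i
          have h3 := hcross i j hij
          linarith
  have htri : ‖(2:ℕ) • c‖ ≤ ‖vj + vi - w‖ + ‖vj + vi - w - (2:ℕ) • c‖ := by
    have := norm_sub_le (vj + vi - w) (vj + vi - w - (2:ℕ) • c)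
    simpa using this
  linarith [hc26, hbound, htri]


end DeltaAux

/-- For irrational `α` there is an infinite `S ⊆ ℕ` such that `‖n²α‖ ≥ 1/4` for every
`n ∈ Δ(S)`, where `‖x‖` is the distance from `x` to the nearest integer (the norm on
`ℝ/ℤ`).  In particular `{n : ‖n²α‖ < 1/4}` is not a `Δ*`-set. -/
theorem exists_infinite_delta_far_from_integers (α : ℝ) (hα : Irrational α) :
    (∃ S : Set ℕ, S.Infinite ∧
      ∀ n ∈ deltaN S, (1 : ℝ) / 4 ≤ ‖(((n : ℝ) ^ 2 * α : ℝ) : AddCircle (1 : ℝ))‖) ∧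
    ¬ IsDeltaStarN { n : ℕ | ‖(((n : ℝ) ^ 2 * α : ℝ) : AddCircle (1 : ℝ))‖ < 1 / 4 } := by
  obtain ⟨S, hS, hSp⟩ := DeltaAux.main_construction α hα
  refine ⟨⟨S, hS, hSp⟩, ?_⟩
  intro h
  obtain ⟨n, hnA, hnD⟩ := h S hS
  exact absurd (hSp n hnD) (not_le.2 hnA)
end
end

section
/- Let 𝒜 be a subalgebra of ℓ^∞(ℤ), the algebra of bounded real-valued sequences indexed by ℤ with the supremum norm, such that 𝒜 contains the constant sequences, is invariant under the shift, and is closed and separable with respect to the supremum norm. Then there exist a compact metrizable topological space X, a homeomorphism T : X → X, and a point x₀ ∈ X such that the map sending a continuous function φ : X → ℝ to the sequence (φ(Tⁿx₀))_{n∈ℤ} is an isometric algebra isomorphism from C(X, ℝ) onto 𝒜. In particular, for every S ⊆ ℤ whose indicator sequence 𝟙_S belongs to 𝒜, there exists a clopen set S̃ ⊆ X such that for every n ∈ ℤ, Tⁿx₀ ∈ S̃ if and only if n ∈ S. -/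
open scoped Classical

open Set TopologicalSpace

namespace FurstenbergAux

variable (A : Subalgebra ℝ (BoundedContinuousFunction ℤ ℝ))

/-- Evaluation at `n` as a function on `A`. -/
def ev (n : ℤ) : ↥A → ℝ := fun f => (f : BoundedContinuousFunction ℤ ℝ) n

/-- The underlying compact set: the closure of the evaluations in the product topology. -/
def Xset : Set (↥A → ℝ) := closure (Set.range (ev A))

lemma ev_mem_Xset (n : ℤ) : ev A n ∈ Xset A := subset_closure ⟨n, rfl⟩

lemma Xset_subset {P : (↥A → ℝ) → Prop} (hP : IsClosed {x | P x})
    (h : ∀ n, P (ev A n)) : ∀ x ∈ Xset A, P x := by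
  intro x hx
  exact closure_minimal (by rintro _ ⟨n, rfl⟩; exact h n) hP hx

lemma isCompact_Xset : IsCompact (Xset A) := by
  have h1 : IsCompact (Set.pi Set.univ fun f : ↥A =>
      Icc (-‖(f : BoundedContinuousFunction ℤ ℝ)‖) ‖(f : BoundedContinuousFunction ℤ ℝ)‖) :=
    isCompact_univ_pi fun f => isCompact_Icc
  refine h1.of_isClosed_subset isClosed_closure ?_
  refine closure_minimal ?_ (isClosed_set_pi fun f _ => isClosed_Icc)
  rintro _ ⟨n, rfl⟩
  intro f _
  have := (f : BoundedContinuousFunction ℤ ℝ).norm_coe_le_norm n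
  rw [Real.norm_eq_abs] at this
  exact Set.mem_Icc.mpr (abs_le.mp this)

/-- The space `X`. -/
def Xspace : Type := ↥(Xset A)

noncomputable instance : TopologicalSpace (Xspace A) :=
  inferInstanceAs (TopologicalSpace ↥(Xset A))

instance : CompactSpace (Xspace A) :=
  isCompact_iff_compactSpace.mp (isCompact_Xset A)

instance : T2Space (Xspace A) := inferInstanceAs (T2Space ↥(Xset A))

lemma lip (x : ↥A → ℝ) (hx : x ∈ Xset A) (f g : ↥A) :
    dist (x f) (x g) ≤ dist f g := by
  have key : ∀ y ∈ Xset A, ∀ f g : ↥A, dist (y f) (y g) ≤ dist f g := by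
    refine Xset_subset A ?_ ?_
    · have : {y : ↥A → ℝ | ∀ f g : ↥A, dist (y f) (y g) ≤ dist f g} =
          ⋂ (f : ↥A) (g : ↥A), {y | dist (y f) (y g) ≤ dist f g} := by
        ext y; simp
      rw [this]
      exact isClosed_iInter fun f => isClosed_iInter fun g =>
        isClosed_le ((continuous_apply f).dist (continuous_apply g)) continuous_const
    · intro n f g
      simp only [ev, Subtype.dist_eq]
      exact BoundedContinuousFunction.dist_coe_le_dist n
  exact key x hx f g

/-- The point `Tⁿ x₀` of `X`. -/
noncomputable def point (n : ℤ) : Xspace A := ⟨ev A n, ev_mem_Xset A n⟩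

lemma val_image_range_point : (Subtype.val '' Set.range (point A)) = Set.range (ev A) := by
  ext x
  constructor
  · rintro ⟨y, ⟨n, rfl⟩, rfl⟩; exact ⟨n, rfl⟩
  · rintro ⟨n, rfl⟩; exact ⟨point A n, ⟨n, rfl⟩, rfl⟩

lemma denseRange_point : DenseRange (point A) := by
  intro x
  refine (closure_subtype (p := (· ∈ Xset A))).mpr ?_
  have h : x.1 ∈ closure (Set.range (ev A)) := x.2
  rw [← val_image_range_point] at h
  exact h

section Shift

variable (hsh : ∀ f ∈ A, (∃ g ∈ A, ∀ n : ℤ, g n = f (n + 1)) ∧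
      (∃ g ∈ A, ∀ n : ℤ, g n = f (n - 1)))

/-- Forward shift on `A`. -/
noncomputable def shiftF (f : ↥A) : ↥A :=
  ⟨((hsh f.1 f.2).1).choose, ((hsh f.1 f.2).1).choose_spec.1⟩

lemma shiftF_apply (f : ↥A) (n : ℤ) :
    (shiftF A hsh f : BoundedContinuousFunction ℤ ℝ) n
      = (f : BoundedContinuousFunction ℤ ℝ) (n + 1) :=
  ((hsh f.1 f.2).1).choose_spec.2 n

/-- Backward shift on `A`. -/
noncomputable def shiftB (f : ↥A) : ↥A :=
  ⟨((hsh f.1 f.2).2).choose, ((hsh f.1 f.2).2).choose_spec.1⟩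

lemma shiftB_apply (f : ↥A) (n : ℤ) :
    (shiftB A hsh f : BoundedContinuousFunction ℤ ℝ) n
      = (f : BoundedContinuousFunction ℤ ℝ) (n - 1) :=
  ((hsh f.1 f.2).2).choose_spec.2 n

lemma shiftF_shiftB (f : ↥A) : shiftF A hsh (shiftB A hsh f) = f := by
  apply Subtype.ext
  ext n
  rw [shiftF_apply, shiftB_apply]
  congr 1
  ring

lemma shiftB_shiftF (f : ↥A) : shiftB A hsh (shiftF A hsh f) = f := by
  apply Subtype.ext
  ext n
  rw [shiftB_apply, shiftF_apply]
  congr 1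
  ring

/-- The induced forward map on the function space. -/
noncomputable def Fmap (x : ↥A → ℝ) : ↥A → ℝ := fun f => x (shiftF A hsh f)

noncomputable def Gmap (x : ↥A → ℝ) : ↥A → ℝ := fun f => x (shiftB A hsh f)

lemma continuous_Fmap : Continuous (Fmap A hsh) :=
  continuous_pi fun f => continuous_apply _

lemma continuous_Gmap : Continuous (Gmap A hsh) :=
  continuous_pi fun f => continuous_apply _

lemma Fmap_ev (n : ℤ) : Fmap A hsh (ev A n) = ev A (n + 1) := by
  funext f
  exact shiftF_apply A hsh f n

lemma Gmap_ev (n : ℤ) : Gmap A hsh (ev A n) = ev A (n - 1) := by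
  funext f
  exact shiftB_apply A hsh f n

lemma Fmap_mem {x : ↥A → ℝ} (hx : x ∈ Xset A) : Fmap A hsh x ∈ Xset A := by
  have h1 : Fmap A hsh x ∈ Fmap A hsh '' closure (Set.range (ev A)) := ⟨x, hx, rfl⟩
  have h2 := image_closure_subset_closure_image (s := Set.range (ev A)) (continuous_Fmap A hsh)
  refine closure_mono ?_ (h2 h1)
  rintro _ ⟨_, ⟨n, rfl⟩, rfl⟩
  exact ⟨n + 1, (Fmap_ev A hsh n).symm⟩

lemma Gmap_mem {x : ↥A → ℝ} (hx : x ∈ Xset A) : Gmap A hsh x ∈ Xset A := by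
  have h1 : Gmap A hsh x ∈ Gmap A hsh '' closure (Set.range (ev A)) := ⟨x, hx, rfl⟩
  have h2 := image_closure_subset_closure_image (s := Set.range (ev A)) (continuous_Gmap A hsh)
  refine closure_mono ?_ (h2 h1)
  rintro _ ⟨_, ⟨n, rfl⟩, rfl⟩
  exact ⟨n - 1, (Gmap_ev A hsh n).symm⟩

/-- The shift homeomorphism of `X`. -/
noncomputable def T : Xspace A ≃ₜ Xspace A where
  toFun x := ⟨Fmap A hsh x.1, Fmap_mem A hsh x.2⟩
  invFun x := ⟨Gmap A hsh x.1, Gmap_mem A hsh x.2⟩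
  left_inv x := by
    apply Subtype.ext
    funext f
    show x.1 (shiftF A hsh (shiftB A hsh f)) = x.1 f
    rw [shiftF_shiftB]
  right_inv x := by
    apply Subtype.ext
    funext f
    show x.1 (shiftB A hsh (shiftF A hsh f)) = x.1 f
    rw [shiftB_shiftF]
  continuous_toFun :=
    Continuous.subtype_mk ((continuous_Fmap A hsh).comp continuous_subtype_val) _
  continuous_invFun :=
    Continuous.subtype_mk ((continuous_Gmap A hsh).comp continuous_subtype_val) _

lemma T_point (n : ℤ) : T A hsh (point A n) = point A (n + 1) := by
  apply Subtype.ext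
  exact Fmap_ev A hsh n

lemma Tsymm_point (n : ℤ) : (T A hsh).symm (point A n) = point A (n - 1) := by
  apply Subtype.ext
  exact Gmap_ev A hsh n

lemma Tpow_point (n : ℤ) : ((T A hsh).toEquiv ^ n) (point A 0) = point A n := by
  induction n using Int.induction_on with
  | zero => simp
  | succ i ih =>
      have h : (T A hsh).toEquiv ^ ((i : ℤ) + 1)
          = (T A hsh).toEquiv * (T A hsh).toEquiv ^ (i : ℤ) := by
        rw [add_comm, zpow_one_add]
      rw [h, Equiv.Perm.mul_apply, ih]
      exact T_point A hsh i
  | pred i ih =>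
      have h : (T A hsh).toEquiv ^ (-(i : ℤ) - 1)
          = ((T A hsh).toEquiv)⁻¹ * (T A hsh).toEquiv ^ (-(i : ℤ)) := by
        rw [sub_eq_add_neg, add_comm, ← zpow_neg_one, ← zpow_add]
      rw [h, Equiv.Perm.mul_apply, ih]
      show ((T A hsh).toEquiv).symm (point A (-(i : ℤ))) = _
      exact Tsymm_point A hsh (-(i : ℤ))

end Shift

/-- The inclusion `ℤ → X`. -/
noncomputable def incl : C(ℤ, Xspace A) := ⟨fun n => point A n, continuous_of_discreteTopology⟩

/-- The algebra homomorphism `Φ`. -/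
noncomputable def Phi : C(Xspace A, ℝ) →ₐ[ℝ] BoundedContinuousFunction ℤ ℝ where
  toFun φ := (BoundedContinuousFunction.mkOfCompact φ).compContinuous (incl A)
  map_one' := by ext n; simp
  map_mul' φ ψ := by ext n; simp
  map_zero' := by ext n; simp
  map_add' φ ψ := by ext n; simp
  commutes' r := by ext n; simp

lemma Phi_apply (φ : C(Xspace A, ℝ)) (n : ℤ) : Phi A φ n = φ (point A n) := rfl

/-- The evaluation continuous function associated with `f ∈ A`. -/
noncomputable def evφ (g : ↥A) : C(Xspace A, ℝ) :=
  ⟨fun x => x.1 g, (continuous_apply g).comp continuous_subtype_val⟩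

lemma Phi_evφ (g : ↥A) : Phi A (evφ A g) = (g : BoundedContinuousFunction ℤ ℝ) := by
  ext n
  rfl

lemma norm_Phi (φ : C(Xspace A, ℝ)) : ‖Phi A φ‖ = ‖φ‖ := by
  refine le_antisymm ?_ ?_
  · calc ‖Phi A φ‖ ≤ ‖BoundedContinuousFunction.mkOfCompact φ‖ :=
        BoundedContinuousFunction.norm_compContinuous_le _ _
    _ = ‖φ‖ := BoundedContinuousFunction.norm_mkOfCompact φ
  · rw [← BoundedContinuousFunction.norm_mkOfCompact φ]
    refine (BoundedContinuousFunction.norm_le (norm_nonneg _)).mpr ?_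
    intro x
    have hcl : IsClosed {y : Xspace A | ‖φ y‖ ≤ ‖Phi A φ‖} :=
      isClosed_le (continuous_norm.comp φ.continuous) continuous_const
    have hr : Set.range (point A) ⊆ {y : Xspace A | ‖φ y‖ ≤ ‖Phi A φ‖} := by
      rintro _ ⟨n, rfl⟩
      exact (Phi A φ).norm_coe_le_norm n
    have := closure_minimal hr hcl (denseRange_point A x)
    simpa using this

lemma isometry_Phi : Isometry (Phi A) :=
  AddMonoidHomClass.isometry_of_norm (Phi A) (norm_Phi A)

lemma range_Phi (hclosed : IsClosed (A : Set (BoundedContinuousFunction ℤ ℝ))) :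
    (Phi A).range = A := by
  have hBmem : ∀ φ, φ ∈ A.comap (Phi A) ↔ Phi A φ ∈ A := fun φ => Iff.rfl
  have hBclosed : IsClosed ((A.comap (Phi A) : Subalgebra ℝ C(Xspace A, ℝ)) :
      Set C(Xspace A, ℝ)) := by
    have : ((A.comap (Phi A) : Subalgebra ℝ C(Xspace A, ℝ)) : Set C(Xspace A, ℝ))
        = (Phi A) ⁻¹' (A : Set (BoundedContinuousFunction ℤ ℝ)) := rfl
    rw [this]
    exact hclosed.preimage (isometry_Phi A).continuous
  have hsepPts : (A.comap (Phi A)).SeparatesPoints := by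
    intro x y hxy
    have hne : x.1 ≠ y.1 := fun h => hxy (Subtype.ext h)
    obtain ⟨g, hg⟩ := Function.ne_iff.mp hne
    refine ⟨_, ⟨evφ A g, ?_, rfl⟩, hg⟩
    show evφ A g ∈ A.comap (Phi A)
    rw [hBmem, Phi_evφ]
    exact g.2
  have htop : (A.comap (Phi A)).topologicalClosure = ⊤ :=
    ContinuousMap.subalgebra_topologicalClosure_eq_top_of_separatesPoints _ hsepPts
  have hBtop : A.comap (Phi A) = ⊤ := by
    refine le_antisymm le_top ?_
    rw [← htop]
    exact Subalgebra.topologicalClosure_minimal le_rfl hBclosed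
  refine le_antisymm ?_ ?_
  · rintro _ ⟨φ, rfl⟩
    have : φ ∈ A.comap (Phi A) := by rw [hBtop]; trivial
    exact this
  · intro f hf
    exact ⟨evφ A ⟨f, hf⟩, Phi_evφ A ⟨f, hf⟩⟩

lemma metrizable (hsep : TopologicalSpace.IsSeparable (A : Set (BoundedContinuousFunction ℤ ℝ))) :
    TopologicalSpace.MetrizableSpace (Xspace A) := by
  haveI : SeparableSpace ↥A := hsep.separableSpace
  obtain ⟨D, Dcount, Ddense⟩ := TopologicalSpace.exists_countable_dense ↥A
  haveI : Countable ↥D := Dcount.to_subtype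
  haveI : TopologicalSpace.MetrizableSpace (↥D → ℝ) := by
    letI := Encodable.ofCountable ↥D
    exact inferInstance
  set r : Xspace A → (↥D → ℝ) := fun x d => x.1 d.1 with hr
  have hcont : Continuous r :=
    continuous_pi fun d => (continuous_apply _).comp continuous_subtype_val
  have hinj : Function.Injective r := by
    intro x y h
    apply Subtype.ext
    funext f
    have hD : ∀ d ∈ D, x.1 d = y.1 d := fun d hd => congrFun h ⟨d, hd⟩
    have key : ∀ ε > (0 : ℝ), dist (x.1 f) (y.1 f) ≤ 2 * ε := by
      intro ε hε
      obtain ⟨d, hdD, hdist⟩ := Metric.mem_closure_iff.mp (Ddense f) ε hε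
      calc dist (x.1 f) (y.1 f) ≤ dist (x.1 f) (x.1 d) + dist (x.1 d) (y.1 f) :=
            dist_triangle _ _ _
        _ = dist (x.1 f) (x.1 d) + dist (y.1 d) (y.1 f) := by rw [hD d hdD]
        _ ≤ dist f d + dist d f := add_le_add (lip A x.1 x.2 f d) (lip A y.1 y.2 d f)
        _ = dist f d + dist f d := by rw [dist_comm d f]
        _ ≤ 2 * ε := by linarith
    have h0 : dist (x.1 f) (y.1 f) ≤ 0 := by
      refine le_of_forall_pos_le_add ?_
      intro ε hε
      have := key (ε / 2) (by linarith)
      linarith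
    exact eq_of_dist_eq_zero (le_antisymm h0 dist_nonneg)
  have hemb := hcont.isClosedEmbedding hinj
  exact hemb.toIsEmbedding.metrizableSpace

end FurstenbergAux


/-- **A version of the Furstenberg correspondence principle.**
Let `𝒜` be a subalgebra of `ℓ^∞(ℤ)` (bounded real sequences indexed by `ℤ` with the
sup norm; here realized as `BoundedContinuousFunction ℤ ℝ` for the discrete topology
on `ℤ`) which is invariant under the shift (in both directions), closed, and separable.
(Containing the constants is automatic for a subalgebra.)  Then there are a compact
metrizable space `X`, a homeomorphism `T : X ≃ₜ X` and a point `x₀ ∈ X` such that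
`φ ↦ (φ(Tⁿx₀))ₙ` is an isometric algebra isomorphism from `C(X, ℝ)` onto `𝒜`.
In particular, for every `S ⊆ ℤ` whose indicator sequence belongs to `𝒜` there is a
clopen `S̃ ⊆ X` with `Tⁿx₀ ∈ S̃ ↔ n ∈ S` for all `n`. -/
theorem furstenberg_correspondence
    (A : Subalgebra ℝ (BoundedContinuousFunction ℤ ℝ))
    (hclosed : IsClosed (A : Set (BoundedContinuousFunction ℤ ℝ)))
    (hsep : TopologicalSpace.IsSeparable (A : Set (BoundedContinuousFunction ℤ ℝ)))
    (hshift : ∀ f ∈ A, (∃ g ∈ A, ∀ n : ℤ, g n = f (n + 1)) ∧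
      (∃ g ∈ A, ∀ n : ℤ, g n = f (n - 1))) :
    ∃ (X : Type) (_ : TopologicalSpace X) (_ : CompactSpace X)
      (_ : TopologicalSpace.MetrizableSpace X) (T : X ≃ₜ X) (x₀ : X)
      (Φ : C(X, ℝ) →ₐ[ℝ] BoundedContinuousFunction ℤ ℝ),
      (∀ (φ : C(X, ℝ)) (n : ℤ), Φ φ n = φ ((T.toEquiv ^ n) x₀)) ∧
      Isometry Φ ∧
      Φ.range = A ∧
      ∀ (S : Set ℤ) (f : BoundedContinuousFunction ℤ ℝ), f ∈ A →
        (∀ n : ℤ, f n = if n ∈ S then 1 else 0) →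
        ∃ Stilde : Set X, IsClopen Stilde ∧
          ∀ n : ℤ, (T.toEquiv ^ n) x₀ ∈ Stilde ↔ n ∈ S := by
  classical
  open FurstenbergAux in
  refine ⟨Xspace A, inferInstance, inferInstance, metrizable A hsep,
    T A hshift, point A 0, Phi A, ?_, isometry_Phi A, range_Phi A hclosed, ?_⟩
  · intro φ n
    rw [Phi_apply, Tpow_point]
  · intro S f hfA hfind
    set g : ↥A := ⟨f, hfA⟩ with hg
    have hval : ∀ x : Xspace A, x.1 g = 0 ∨ x.1 g = 1 := by
      intro x
      refine Xset_subset A (P := fun y => y g = 0 ∨ y g = 1) ?_ ?_ x.1 x.2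
      · have : {y : ↥A → ℝ | y g = 0 ∨ y g = 1} =
            (fun y : ↥A → ℝ => y g) ⁻¹' ({0, 1} : Set ℝ) := by
          ext y; simp [Set.mem_insert_iff]
        rw [this]
        exact ((Set.finite_singleton (1:ℝ)).insert 0).isClosed.preimage
          (continuous_apply g)
      · intro n
        show f n = 0 ∨ f n = 1
        rw [hfind n]
        by_cases h : n ∈ S <;> simp [h]
    refine ⟨{x : Xspace A | x.1 g = 1}, ⟨?_, ?_⟩, ?_⟩
    · have : {x : Xspace A | x.1 g = 1} =
          (fun x : Xspace A => x.1 g) ⁻¹' ({1} : Set ℝ) := rfl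
      rw [this]
      exact isClosed_singleton.preimage ((continuous_apply g).comp continuous_subtype_val)
    · have heq : {x : Xspace A | x.1 g = 1} =
          (fun x : Xspace A => x.1 g) ⁻¹' (Set.Ioi (1/2 : ℝ)) := by
        ext x
        constructor
        · intro h
          have : x.1 g = 1 := h
          simp only [Set.mem_preimage, Set.mem_Ioi, this]
          norm_num
        · intro h
          rcases hval x with h0 | h1
          · exfalso
            simp only [Set.mem_preimage, Set.mem_Ioi, h0] at h
            norm_num at h
          · exact h1
      rw [heq]
      exact isOpen_Ioi.preimage ((continuous_apply g).comp continuous_subtype_val)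
    · intro n
      rw [Tpow_point]
      show ev A n g = 1 ↔ n ∈ S
      have : ev A n g = f n := rfl
      rw [this, hfind n]
      by_cases h : n ∈ S <;> simp [h]
end

section
/- Let d ≥ 1 and let (p_j)_{j≥1} be a sequence of positive integers. Define finite sets E_j ⊆ ℕ by E₀ = {0} and, for j ≥ 1, E_j = {0} ∪ ⋃_{k=1}^{min(j,d)} (E_{j−k} + p_{j−k+1}). Then for every j ≥ 0, E_j equals the set of all sums ε₁p₁ + ⋯ + ε_jp_j over ε ∈ {0,1}^j such that after the first index i with ε_i = 1 (if any), there is no block of d consecutive indices at which ε equals 0; in particular 0 ∈ E_j, corresponding to ε identically 0. -/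
/-- The sets `E_j` defined by `E₀ = {0}` and, for `j ≥ 1`,
`E_j = {0} ∪ ⋃_{k=1}^{min(j,d)} (E_{j−k} + p_{j−k+1})`.
Here `p` is `0`-indexed, i.e. `p i` is `p_{i+1}` of the paper, and the union below is
over `k' = k - 1 < min(j, d)`, so `E_{j-k} + p_{j-k+1}` is the image of
`Ej d p (j - 1 - k')` under `(· + p (j - 1 - k'))`. -/
def Ej (d : ℕ) (p : ℕ → ℕ) : ℕ → Set ℕ
  | 0 => {0}
  | j + 1 => {0} ∪ ⋃ k ∈ Finset.range (min (j + 1) d), ((· + p (j - k)) '' Ej d p (j - k))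
  termination_by j => j
  decreasing_by omega

/-- `E_j` equals the set of all sums `ε₁p₁ + ⋯ + ε_jp_j` over `ε ∈ {0,1}^j` (with `F`
the set of indices where `ε = 1`, `0`-indexed, so `F ⊆ range j`) such that after the
first index carrying a `1` there is no block of `d` consecutive indices at which `ε`
is `0`: every window `{i, …, i+d-1} ⊆ {0, …, j-1}` lying strictly after some element
of `F` meets `F`.  In particular `0 ∈ E_j`, corresponding to `ε` identically `0`. -/
theorem ej_eq_gapBoundedSums (d : ℕ) (hd : 1 ≤ d) (p : ℕ → ℕ) (hp : ∀ i, 0 < p i)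
    (j : ℕ) :
    Ej d p j = { s : ℕ | ∃ F : Finset ℕ, F ⊆ Finset.range j ∧
      (∀ i : ℕ, (∃ m ∈ F, m < i) → i + d ≤ j → ∃ k ∈ F, i ≤ k ∧ k < i + d) ∧
      s = ∑ i ∈ F, p i } := by
  induction j using Nat.strong_induction_on with
  | _ j ih =>
  cases j with
  | zero =>
    ext s
    simp only [Ej, Set.mem_singleton_iff, Set.mem_setOf_eq]
    constructor
    · rintro rfl
      exact ⟨∅, by simp⟩
    · rintro ⟨F, hF, -, rfl⟩
      have : F = ∅ := Finset.subset_empty.mp (by simpa using hF)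
      simp [this]
  | succ j =>
    ext s
    rw [Ej]
    simp only [Set.mem_union, Set.mem_iUnion, Set.mem_image, Set.mem_setOf_eq,
      Set.mem_singleton_iff, Finset.mem_range, exists_prop]
    constructor
    · rintro (rfl | ⟨k, hk, t, ht, rfl⟩)
      · exact ⟨∅, by simp⟩
      · have hkd : k < d := lt_of_lt_of_le hk (min_le_right _ _)
        have hkj : k ≤ j := by
          have := lt_of_lt_of_le hk (min_le_left _ _); omega
        rw [ih (j - k) (by omega)] at ht
        obtain ⟨F, hFr, hgap, rfl⟩ := ht
        have hnotmem : j - k ∉ F := by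
          intro h; have := hFr h; simp only [Finset.mem_range] at this; omega
        refine ⟨insert (j - k) F, ?_, ?_, ?_⟩
        · intro x hx
          rcases Finset.mem_insert.mp hx with rfl | hx
          · simp only [Finset.mem_range]; omega
          · have := hFr hx; simp only [Finset.mem_range] at this ⊢; omega
        · rintro i ⟨m, hm, hmi⟩ hid
          by_cases hij : i ≤ j - k
          · by_cases h2 : j - k < i + d
            · exact ⟨j - k, Finset.mem_insert_self _ _, hij, h2⟩
            · have hm' : m ∈ F := by
                rcases Finset.mem_insert.mp hm with rfl | h
                · omega
                · exact h
              obtain ⟨k', hk', h1, h2'⟩ := hgap i ⟨m, hm', hmi⟩ (by omega)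
              exact ⟨k', Finset.mem_insert_of_mem hk', h1, h2'⟩
          · omega
        · rw [Finset.sum_insert hnotmem]; omega
    · rintro ⟨F, hFr, hgap, rfl⟩
      rcases Finset.eq_empty_or_nonempty F with rfl | hne
      · left; simp
      · right
        set M := F.max' hne with hM
        have hMF : M ∈ F := F.max'_mem hne
        have hMj : M ≤ j := by
          have := hFr hMF; simp only [Finset.mem_range] at this; omega
        have hMd : j < M + d := by
          by_contra h
          push_neg at h
          obtain ⟨k', hk', h1, h2⟩ := hgap (M + 1) ⟨M, hMF, by omega⟩ (by omega)
          have := F.le_max' k' hk'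
          omega
        have hjm : j - (j - M) = M := by omega
        refine ⟨j - M, by omega, ∑ i ∈ F.erase M, p i, ?_, ?_⟩
        · rw [hjm, ih M (by omega)]
          refine ⟨F.erase M, ?_, ?_, rfl⟩
          · intro x hx
            have hx' := Finset.mem_erase.mp hx
            have h1 := F.le_max' x hx'.2
            simp only [Finset.mem_range]; omega
          · rintro i ⟨m, hm, hmi⟩ hid
            obtain ⟨k', hk', h1, h2⟩ := hgap i ⟨m, (Finset.mem_erase.mp hm).2, hmi⟩ (by omega)
            exact ⟨k', Finset.mem_erase.mpr ⟨by omega, hk'⟩, h1, h2⟩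
        · rw [hjm, Finset.sum_erase_add F p hMF]
end
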